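/- arXiv:1601.04856 — 5 statements merged into one kernel-verified Lean document; each statement's English description precedes it below -/
import Mathlib

section
/- (Transversal Continuation Principle) Let H be a hypergraph and let A, B ⊆ E(H) be sets of edges. If B ⊆ A, then τ_g(H|A) ≤ τ_g(H|B) and τ_g'(H|A) ≤ τ_g'(H|B). -/
variable {V : Type} [Fintype V] [DecidableEq V]

/-- The set of legal moves in the transversal game with uncovered edge set `E`:
the vertices hitting at least one uncovered edge. -/
def playable (E : Finset (Finset V)) : Finset V :=
  Finset.univ.filter (fun v => ∃ e ∈ E, v ∈ e)

/-- The number of moves remaining in the transversal game with uncovered edge set `E`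
under optimal play, where `ehTurn = true` iff Edge-hitter (the minimizer) moves next;
Staller (the maximizer) moves next iff `ehTurn = false`.  Each move must hit at least
one uncovered edge, and the game ends when no uncovered edge remains. -/
def gameVal (ehTurn : Bool) (E : Finset (Finset V)) : ℕ :=
  if h : (playable E).Nonempty then
    1 +
      (if ehTurn then
        (playable E).attach.inf' (Finset.attach_nonempty_iff.mpr h)
          (fun v => gameVal (!ehTurn) (E.filter (fun e => v.1 ∉ e)))
      else
        (playable E).attach.sup' (Finset.attach_nonempty_iff.mpr h)
          (fun v => gameVal (!ehTurn) (E.filter (fun e => v.1 ∉ e))))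
  else 0
termination_by E.card
decreasing_by
  all_goals
    obtain ⟨v, hv⟩ := v
    simp only [playable, Finset.mem_filter, Finset.mem_univ, true_and] at hv
    obtain ⟨e, he, hve⟩ := hv
    exact Finset.card_lt_card (Finset.filter_ssubset.mpr ⟨e, he, by simp [hve]⟩)

/-- The game transversal number `τ_g`: Edge-hitter makes the first move. -/
def gameTransversalNum (E : Finset (Finset V)) : ℕ := gameVal true E

/-- The Staller-start game transversal number `τ_g'`: Staller makes the first move. -/
def stallerGameTransversalNum (E : Finset (Finset V)) : ℕ := gameVal false E

/-- The transversal number `τ`: the minimum size of a set of vertices meeting all edges. -/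
noncomputable def transversalNum (E : Finset (Finset V)) : ℕ :=
  sInf {n | ∃ T : Finset V, (∀ e ∈ E, ∃ v ∈ T, v ∈ e) ∧ T.card = n}

lemma playable_mono {F G : Finset (Finset V)} (h : F ⊆ G) : playable F ⊆ playable G := by
  intro v hv
  simp only [playable, Finset.mem_filter, Finset.mem_univ, true_and] at *
  obtain ⟨e, he, hve⟩ := hv
  exact ⟨e, h he, hve⟩

lemma gameVal_of_empty {F : Finset (Finset V)} (h : ¬ (playable F).Nonempty) (t : Bool) :
    gameVal t F = 0 := by
  rw [gameVal, dif_neg h]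

lemma card_filter_lt {G : Finset (Finset V)} {v : V} (hv : v ∈ playable G) :
    (G.filter (fun e => v ∉ e)).card < G.card := by
  simp only [playable, Finset.mem_filter, Finset.mem_univ, true_and] at hv
  obtain ⟨e, he, hve⟩ := hv
  exact Finset.card_lt_card (Finset.filter_ssubset.mpr ⟨e, he, by simp [hve]⟩)

lemma filter_eq_of_unplayable {F : Finset (Finset V)} {v : V} (hv : v ∉ playable F) :
    F.filter (fun e => v ∉ e) = F := by
  apply Finset.filter_eq_self.mpr
  intro e he hve
  exact hv (by simp only [playable, Finset.mem_filter, Finset.mem_univ, true_and]; exact ⟨e, he, hve⟩)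

lemma gameVal_true_le {F : Finset (Finset V)} {v : V} (hv : v ∈ playable F) :
    gameVal true F ≤ 1 + gameVal false (F.filter (fun e => v ∉ e)) := by
  have hF : (playable F).Nonempty := ⟨v, hv⟩
  rw [gameVal, dif_pos hF, if_pos rfl]
  exact Nat.add_le_add_left (Finset.inf'_le _ (Finset.mem_attach _ ⟨v, hv⟩)) 1

lemma gameVal_false_ge {F : Finset (Finset V)} {v : V} (hv : v ∈ playable F) :
    1 + gameVal true (F.filter (fun e => v ∉ e)) ≤ gameVal false F := by
  have hF : (playable F).Nonempty := ⟨v, hv⟩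
  conv_rhs => rw [gameVal]
  rw [dif_pos hF, if_neg (by simp)]
  simp only [Bool.not_false]
  exact Nat.add_le_add_left (Finset.le_sup' (fun x : {x // x ∈ playable F} =>
    gameVal true (F.filter (fun e => x.1 ∉ e))) (Finset.mem_attach _ ⟨v, hv⟩)) 1

lemma gameVal_true_exists {F : Finset (Finset V)} (hF : (playable F).Nonempty) :
    ∃ v ∈ playable F, gameVal true F = 1 + gameVal false (F.filter (fun e => v ∉ e)) := by
  obtain ⟨v, _, hval⟩ := Finset.exists_mem_eq_inf' (Finset.attach_nonempty_iff.mpr hF)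
    (fun v : {x // x ∈ playable F} => gameVal false (F.filter (fun e => v.1 ∉ e)))
  refine ⟨v.1, v.2, ?_⟩
  rw [gameVal, dif_pos hF, if_pos rfl]
  simp only [Bool.not_true]
  rw [hval]

lemma gameVal_false_exists {F : Finset (Finset V)} (hF : (playable F).Nonempty) :
    ∃ v ∈ playable F, gameVal false F = 1 + gameVal true (F.filter (fun e => v ∉ e)) := by
  obtain ⟨v, _, hval⟩ := Finset.exists_mem_eq_sup' (Finset.attach_nonempty_iff.mpr hF)
    (fun v : {x // x ∈ playable F} => gameVal true (F.filter (fun e => v.1 ∉ e)))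
  refine ⟨v.1, v.2, ?_⟩
  rw [gameVal, dif_pos hF, if_neg (by simp)]
  simp only [Bool.not_false]
  rw [hval]

lemma key : ∀ n : ℕ, ∀ F G : Finset (Finset V), G.card ≤ n → F ⊆ G →
    (gameVal true F ≤ gameVal true G) ∧ (gameVal false F ≤ gameVal false G) ∧
    (gameVal true F ≤ 1 + gameVal false G) ∧ (gameVal false F ≤ 1 + gameVal true G) := by
  intro n
  induction n with
  | zero =>
    intro F G hcard hFG
    have hG : G = ∅ := Finset.card_eq_zero.mp (Nat.le_zero.mp hcard)
    have hF : F = ∅ := Finset.subset_empty.mp (hG ▸ hFG)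
    have hemp : ¬ (playable (∅ : Finset (Finset V))).Nonempty := by
      simp [playable]
    subst hG hF
    simp [gameVal_of_empty hemp]
  | succ n ih =>
    intro F G hcard hFG
    by_cases hF : (playable F).Nonempty
    · have hG : (playable G).Nonempty := hF.mono (playable_mono hFG)
      have hsub : ∀ v : V, F.filter (fun e => v ∉ e) ⊆ G.filter (fun e => v ∉ e) :=
        fun v => Finset.filter_subset_filter _ hFG
      have hcard' : ∀ v ∈ playable G, (G.filter (fun e => v ∉ e)).card ≤ n :=
        fun v hv => Nat.lt_succ_iff.mp (lt_of_lt_of_le (card_filter_lt hv) hcard)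
      refine ⟨?_, ?_, ?_, ?_⟩
      · -- gameVal true F ≤ gameVal true G
        obtain ⟨v, hv, hval⟩ := gameVal_true_exists hG
        rw [hval]
        by_cases hvF : v ∈ playable F
        · exact le_trans (gameVal_true_le hvF)
            (Nat.add_le_add_left ((ih _ _ (hcard' v hv) (hsub v)).2.1) 1)
        · have : F ⊆ G.filter (fun e => v ∉ e) := by
            rw [← filter_eq_of_unplayable hvF]; exact hsub v
          exact (ih _ _ (hcard' v hv) this).2.2.1
      · -- gameVal false F ≤ gameVal false G
        obtain ⟨v, hv, hval⟩ := gameVal_false_exists hF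
        have hvG : v ∈ playable G := playable_mono hFG hv
        rw [hval]
        exact le_trans (Nat.add_le_add_left ((ih _ _ (hcard' v hvG) (hsub v)).1) 1)
          (gameVal_false_ge hvG)
      · -- gameVal true F ≤ 1 + gameVal false G
        obtain ⟨v, hv⟩ := hF
        have hvG : v ∈ playable G := playable_mono hFG hv
        calc gameVal true F ≤ 1 + gameVal false (F.filter (fun e => v ∉ e)) :=
              gameVal_true_le hv
          _ ≤ 1 + (1 + gameVal true (G.filter (fun e => v ∉ e))) :=
              Nat.add_le_add_left ((ih _ _ (hcard' v hvG) (hsub v)).2.2.2) 1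
          _ ≤ 1 + gameVal false G := Nat.add_le_add_left (gameVal_false_ge hvG) 1
      · -- gameVal false F ≤ 1 + gameVal true G
        obtain ⟨v, hv, hval⟩ := gameVal_false_exists hF
        obtain ⟨w, hw, hwal⟩ := gameVal_true_exists hG
        rw [hval, hwal]
        refine Nat.add_le_add_left ?_ 1
        by_cases hwF : w ∈ playable (F.filter (fun e => v ∉ e))
        · calc gameVal true (F.filter (fun e => v ∉ e))
              ≤ 1 + gameVal false ((F.filter (fun e => v ∉ e)).filter (fun e => w ∉ e)) :=
                gameVal_true_le hwF
            _ ≤ 1 + gameVal false (G.filter (fun e => w ∉ e)) := by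
                refine Nat.add_le_add_left ((ih _ _ (hcard' w hw) ?_).2.1) 1
                intro e he
                simp only [Finset.mem_filter] at he ⊢
                exact ⟨hFG he.1.1, he.2⟩
        · have : F.filter (fun e => v ∉ e) ⊆ G.filter (fun e => w ∉ e) := by
            rw [← filter_eq_of_unplayable hwF]
            intro e he
            simp only [Finset.mem_filter] at he ⊢
            exact ⟨hFG he.1.1, he.2⟩
          exact (ih _ _ (hcard' w hw) this).2.2.1
    · simp [gameVal_of_empty hF]

/-- Transversal Continuation Principle: if `B ⊆ A ⊆ E(H)`, then playing the game on the
partially covered hypergraph `H|A` (the edges of `A` already covered, i.e. with uncovered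
edge set `E \ A`) finishes no later than on `H|B`, for either player moving first. -/
theorem transversal_continuation_principle
    {V : Type} [Fintype V] [DecidableEq V] (E : Finset (Finset V))
    (hedge : ∀ e ∈ E, e.Nonempty)
    (A B : Finset (Finset V)) (hA : A ⊆ E) (hB : B ⊆ E) (hBA : B ⊆ A) :
    gameVal true (E \ A) ≤ gameVal true (E \ B) ∧
      gameVal false (E \ A) ≤ gameVal false (E \ B) := by
  have h := key (E \ B).card (E \ A) (E \ B) le_rfl
    (Finset.sdiff_subset_sdiff (le_refl E) hBA)
  exact ⟨h.1, h.2.1⟩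
end

section
/- If the hypergraph H is a disjoint union of complete k-uniform hypergraphs (for some k ≥ 1), then τ(H) = τ_g(H) = τ_g'(H). -/
variable {V : Type} [Fintype V] [DecidableEq V]

private lemma key_gameVal
    (k : ℕ) (hk : 1 ≤ k)
    (P : Finpartition (Finset.univ : Finset V))
    (E : Finset (Finset V))
    (hE : ∀ e : Finset V, e ∈ E ↔ e.card = k ∧ ∃ p ∈ P.parts, e ⊆ p) :
    ∀ n (D : Finset V) (b : Bool), (Finset.univ \ D).card = n →
      gameVal b (E.filter (fun e => Disjoint e D)) =
        ∑ p ∈ P.parts, ((p \ D).card - (k - 1)) := by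
  intro n
  induction n using Nat.strong_induction_on with
  | _ n ih =>
    intro D b hn
    set ED := E.filter (fun e => Disjoint e D) with hED
    have hplay : ∀ v ∈ playable ED, ∃ p ∈ P.parts, v ∈ p \ D ∧ k ≤ (p \ D).card := by
      intro v hv
      simp only [playable, Finset.mem_filter, Finset.mem_univ, true_and] at hv
      obtain ⟨e, he, hve⟩ := hv
      rw [hED, Finset.mem_filter] at he
      obtain ⟨heE, hdisj⟩ := he
      rw [hE] at heE
      obtain ⟨hcard, p, hp, hep⟩ := heE
      have hesub : e ⊆ p \ D := fun x hx =>
        Finset.mem_sdiff.mpr ⟨hep hx, Finset.disjoint_left.mp hdisj hx⟩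
      exact ⟨p, hp, hesub hve, hcard ▸ Finset.card_le_card hesub⟩
    rw [gameVal]
    by_cases h : (playable ED).Nonempty
    · rw [dif_pos h]
      have hval : ∀ v ∈ playable ED, gameVal (!b) (ED.filter (fun e => v ∉ e)) =
          (∑ p ∈ P.parts, ((p \ D).card - (k - 1))) - 1 := by
        intro v hv
        obtain ⟨p0, hp0, hvp0, hck⟩ := hplay v hv
        have hvD : v ∉ D := (Finset.mem_sdiff.mp hvp0).2
        have hfilt : ED.filter (fun e => v ∉ e)
            = E.filter (fun e => Disjoint e (insert v D)) := by
          rw [hED, Finset.filter_filter]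
          apply Finset.filter_congr
          intro e _
          simp [Finset.disjoint_insert_right, and_comm]
        have hlt : (Finset.univ \ insert v D).card < n := by
          rw [Finset.sdiff_insert, Finset.card_erase_of_mem (by simp [hvD]), hn]
          have : 0 < n := by
            rw [← hn]
            exact Finset.card_pos.mpr ⟨v, by simp [hvD]⟩
          omega
        rw [hfilt, ih _ hlt (insert v D) (!b) rfl]
        have hterm : ∀ p ∈ P.parts.erase p0, (p \ insert v D) = p \ D := by
          intro p hp
          have hne : p ≠ p0 := Finset.ne_of_mem_erase hp
          have hdisj := P.disjoint (Finset.mem_coe.mpr (Finset.mem_of_mem_erase hp))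
            (Finset.mem_coe.mpr hp0) hne
          have hvnp : v ∉ p := Finset.disjoint_right.mp hdisj (Finset.mem_sdiff.mp hvp0).1
          rw [Finset.sdiff_insert, Finset.erase_eq_of_notMem (by simp [hvnp])]
        rw [← Finset.sum_erase_add _ _ hp0, ← Finset.sum_erase_add _ _ hp0]
        rw [Finset.sum_congr rfl (fun p hp => by rw [hterm p hp])]
        rw [Finset.sdiff_insert, Finset.card_erase_of_mem hvp0]
        omega
      have hS1 : 1 ≤ ∑ p ∈ P.parts, ((p \ D).card - (k - 1)) := by
        obtain ⟨v, hv⟩ := h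
        obtain ⟨p, hp, _, hck⟩ := hplay v hv
        calc 1 ≤ (p \ D).card - (k - 1) := by omega
          _ ≤ _ := Finset.single_le_sum (f := fun p => (p \ D).card - (k - 1))
            (fun _ _ => Nat.zero_le _) hp
      have hfun : (fun v : {x // x ∈ playable ED} =>
          gameVal (!b) (ED.filter (fun e => v.1 ∉ e)))
          = fun _ => (∑ p ∈ P.parts, ((p \ D).card - (k - 1))) - 1 :=
        funext fun v => hval v.1 v.2
      rw [hfun]
      simp only [Finset.inf'_const, Finset.sup'_const, ite_self]
      omega
    · rw [dif_neg h]
      symm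
      apply Finset.sum_eq_zero
      intro p hp
      have hle : (p \ D).card ≤ k - 1 := by
        by_contra hc
        have hck : k ≤ (p \ D).card := by omega
        obtain ⟨e, hesub, hec⟩ := Finset.exists_subset_card_eq hck
        have heE : e ∈ ED := by
          rw [hED, Finset.mem_filter]
          refine ⟨(hE e).mpr ⟨hec, p, hp, hesub.trans Finset.sdiff_subset⟩, ?_⟩
          exact Finset.disjoint_left.mpr fun x hx => (Finset.mem_sdiff.mp (hesub hx)).2
        have hen : e.Nonempty := Finset.card_pos.mp (by omega)
        obtain ⟨v, hv⟩ := hen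
        have hvp : v ∈ playable ED := by
          simp only [playable, Finset.mem_filter, Finset.mem_univ, true_and]
          exact ⟨e, heE, hv⟩
        exact h ⟨v, hvp⟩
      omega

private lemma key_tau
    (k : ℕ) (hk : 1 ≤ k)
    (P : Finpartition (Finset.univ : Finset V))
    (hparts : ∀ p ∈ P.parts, k ≤ p.card)
    (E : Finset (Finset V))
    (hE : ∀ e : Finset V, e ∈ E ↔ e.card = k ∧ ∃ p ∈ P.parts, e ⊆ p) :
    sInf {n | ∃ T : Finset V, (∀ e ∈ E, ∃ v ∈ T, v ∈ e) ∧ T.card = n}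
      = ∑ p ∈ P.parts, (p.card - (k - 1)) := by
  classical
  have hch : ∀ p ∈ P.parts, ∃ s ⊆ p, s.card = k - 1 := fun p hp =>
    Finset.exists_subset_card_eq (le_trans (by omega) (hparts p hp))
  choose! f hf1 hf2 using hch
  set T : Finset V := P.parts.biUnion (fun p => p \ f p) with hT
  have hdisjparts : ∀ p ∈ P.parts, ∀ q ∈ P.parts, p ≠ q → Disjoint p q := by
    intro p hp q hq hne
    exact P.disjoint (Finset.mem_coe.mpr hp) (Finset.mem_coe.mpr hq) hne
  have hTcard : T.card = ∑ p ∈ P.parts, (p.card - (k - 1)) := by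
    rw [hT, Finset.card_biUnion (fun p hp q hq hne =>
      ((hdisjparts p hp q hq hne).mono Finset.sdiff_subset Finset.sdiff_subset))]
    exact Finset.sum_congr rfl fun p hp => by
      rw [Finset.card_sdiff_of_subset (hf1 p hp), hf2 p hp]
  have hTtrans : ∀ e ∈ E, ∃ v ∈ T, v ∈ e := by
    intro e he
    rw [hE] at he
    obtain ⟨hc, p, hp, hep⟩ := he
    have hns : ¬ e ⊆ f p := fun hsub => by
      have := Finset.card_le_card hsub
      rw [hf2 p hp, hc] at this; omega
    obtain ⟨v, hv, hvn⟩ := Finset.not_subset.mp hns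
    exact ⟨v, Finset.mem_biUnion.mpr ⟨p, hp, Finset.mem_sdiff.mpr ⟨hep hv, hvn⟩⟩, hv⟩
  have hmem : (∑ p ∈ P.parts, (p.card - (k - 1)))
      ∈ {n | ∃ T : Finset V, (∀ e ∈ E, ∃ v ∈ T, v ∈ e) ∧ T.card = n} :=
    ⟨T, hTtrans, hTcard⟩
  apply le_antisymm
  · exact Nat.sInf_le hmem
  · apply le_csInf ⟨_, hmem⟩
    rintro n ⟨S, hS, rfl⟩
    have hpart : ∀ p ∈ P.parts, p.card - (k - 1) ≤ (p ∩ S).card := by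
      intro p hp
      have hsd : (p \ S).card ≤ k - 1 := by
        by_contra hc
        obtain ⟨e, hesub, hec⟩ := Finset.exists_subset_card_eq
          (show k ≤ (p \ S).card by omega)
        have heE : e ∈ E := (hE e).mpr ⟨hec, p, hp, hesub.trans Finset.sdiff_subset⟩
        obtain ⟨v, hvS, hve⟩ := hS e heE
        exact (Finset.mem_sdiff.mp (hesub hve)).2 hvS
      have := Finset.card_inter_add_card_sdiff p S
      omega
    calc ∑ p ∈ P.parts, (p.card - (k - 1))
        ≤ ∑ p ∈ P.parts, (p ∩ S).card := Finset.sum_le_sum hpart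
      _ = (P.parts.biUnion (fun p => p ∩ S)).card :=
          (Finset.card_biUnion (fun p hp q hq hne =>
            ((hdisjparts p hp q hq hne).mono Finset.inter_subset_left
              Finset.inter_subset_left))).symm
      _ ≤ S.card := Finset.card_le_card (by
          intro x hx
          obtain ⟨p, _, hxp⟩ := Finset.mem_biUnion.mp hx
          exact (Finset.mem_inter.mp hxp).2)

/-- If `H` is a disjoint union of complete `k`-uniform hypergraphs (the vertex set is
partitioned into parts of size at least `k`, and the edges are exactly all `k`-element
subsets lying inside a single part), then `τ(H) = τ_g(H) = τ_g'(H)`. -/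
theorem tau_eq_gameTau_of_disjoint_union_complete_uniform
    {V : Type} [Fintype V] [DecidableEq V]
    (k : ℕ) (hk : 1 ≤ k)
    (P : Finpartition (Finset.univ : Finset V))
    (hparts : ∀ p ∈ P.parts, k ≤ p.card)
    (E : Finset (Finset V))
    (hE : ∀ e : Finset V, e ∈ E ↔ e.card = k ∧ ∃ p ∈ P.parts, e ⊆ p) :
    transversalNum E = gameTransversalNum E ∧
      transversalNum E = stallerGameTransversalNum E := by
  classical
  have hfilter : E.filter (fun e => Disjoint e (∅ : Finset V)) = E := by
    simp
  have hg : ∀ b : Bool, gameVal b E = ∑ p ∈ P.parts, (p.card - (k - 1)) := by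
    intro b
    have h2 := key_gameVal k hk P E hE (Finset.univ \ (∅ : Finset V)).card ∅ b rfl
    simp only [hfilter, Finset.sdiff_empty] at h2
    exact h2
  have ht : transversalNum E = ∑ p ∈ P.parts, (p.card - (k - 1)) :=
    key_tau k hk P hparts E hE
  exact ⟨by rw [ht, gameTransversalNum, hg], by rw [ht, stallerGameTransversalNum, hg]⟩
end

section
/- For every positive integer k and every hypergraph H of order n ≤ 2^{k−1} − 1, every k-corona H^k of H satisfies τ_g(H^k) = 2τ(H^k) − 1 = 2n − 1 and τ_g'(H^k) = 2τ(H^k) = 2n. -/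
variable {V : Type} [Fintype V] [DecidableEq V]

namespace Corona

lemma mem_playable {E : Finset (Finset V)} {v : V} {e : Finset V} (he : e ∈ E) (hv : v ∈ e) :
    v ∈ playable E := by
  simp only [playable, Finset.mem_filter, Finset.mem_univ, true_and]
  exact ⟨e, he, hv⟩

lemma gameVal_of_empty {E : Finset (Finset V)} (t : Bool) (h : ¬ (playable E).Nonempty) :
    gameVal t E = 0 := by rw [gameVal, dif_neg h]

lemma filter_card_lt {E : Finset (Finset V)} {v : V} (hv : v ∈ playable E) :
    (E.filter (fun e => v ∉ e)).card < E.card := by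
  simp only [playable, Finset.mem_filter, Finset.mem_univ, true_and] at hv
  obtain ⟨e, he, hve⟩ := hv
  exact Finset.card_lt_card (Finset.filter_ssubset.mpr ⟨e, he, by simp [hve]⟩)

lemma le_gameVal {E : Finset (Finset V)} (t : Bool) (h : (playable E).Nonempty) (c : ℕ)
    (hc : ∀ v ∈ playable E, c ≤ 1 + gameVal (!t) (E.filter (fun e => v ∉ e))) :
    c ≤ gameVal t E := by
  rw [gameVal, dif_pos h]
  have key : ∀ w : {x // x ∈ playable E}, w ∈ (playable E).attach →
      c ≤ 1 + gameVal (!t) (E.filter (fun e => w.1 ∉ e)) := fun w _ => hc w.1 w.2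
  cases t
  · rw [if_neg (by simp)]
    obtain ⟨v, hv⟩ := h
    refine le_trans (key ⟨v, hv⟩ (Finset.mem_attach _ _)) ?_
    have := Finset.le_sup' (fun w : {x // x ∈ playable E} =>
      gameVal (!false) (E.filter (fun e => w.1 ∉ e))) (Finset.mem_attach _ ⟨v, hv⟩)
    omega
  · rw [if_pos rfl]
    rcases Nat.eq_zero_or_pos c with rfl | hcpos
    · exact Nat.zero_le _
    · have h2 : c - 1 ≤ (playable E).attach.inf' (Finset.attach_nonempty_iff.mpr h)
          (fun w => gameVal (!true) (E.filter (fun e => w.1 ∉ e))) :=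
        Finset.le_inf' _ _ (fun w hw => by have := key w hw; omega)
      omega

lemma gameVal_true_le {E : Finset (Finset V)} {v : V} (hv : v ∈ playable E) :
    gameVal true E ≤ 1 + gameVal false (E.filter (fun e => v ∉ e)) := by
  have h : (playable E).Nonempty := ⟨v, hv⟩
  conv_lhs => rw [gameVal]
  rw [dif_pos h, if_pos rfl]
  have := Finset.inf'_le (fun w : {x // x ∈ playable E} =>
    gameVal (!true) (E.filter (fun e => w.1 ∉ e))) (Finset.mem_attach _ ⟨v, hv⟩)
  simp only [Bool.not_true] at this ⊢
  omega

lemma le_gameVal_false {E : Finset (Finset V)} {v : V} (hv : v ∈ playable E) :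
    1 + gameVal true (E.filter (fun e => v ∉ e)) ≤ gameVal false E := by
  have h : (playable E).Nonempty := ⟨v, hv⟩
  conv_rhs => rw [gameVal]
  rw [dif_pos h, if_neg (by simp)]
  have := Finset.le_sup' (fun w : {x // x ∈ playable E} =>
    gameVal (!false) (E.filter (fun e => w.1 ∉ e))) (Finset.mem_attach _ ⟨v, hv⟩)
  simp only [Bool.not_false] at this ⊢
  omega

lemma gameVal_false_le {E : Finset (Finset V)} (h : (playable E).Nonempty) (c : ℕ)
    (hc : ∀ v ∈ playable E, 1 + gameVal true (E.filter (fun e => v ∉ e)) ≤ c) :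
    gameVal false E ≤ c := by
  conv_lhs => rw [gameVal]
  rw [dif_pos h, if_neg (by simp)]
  obtain ⟨v₀, hv₀⟩ := h
  have hc1 : 1 ≤ c := le_trans (by omega) (hc v₀ hv₀)
  have h2 : (playable E).attach.sup' (Finset.attach_nonempty_iff.mpr ⟨v₀, hv₀⟩)
      (fun w => gameVal (!false) (E.filter (fun e => w.1 ∉ e))) ≤ c - 1 :=
    Finset.sup'_le _ _ (fun w hw => by have := hc w.1 w.2; simp only [Bool.not_false]; omega)
  omega

lemma playable_empty_iff {E : Finset (Finset V)} (hne : ∀ e ∈ E, e.Nonempty) :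
    ¬ (playable E).Nonempty ↔ E = ∅ := by
  constructor
  · intro h
    by_contra hE
    obtain ⟨e, he⟩ := Finset.nonempty_iff_ne_empty.mpr hE
    obtain ⟨v, hv⟩ := hne e he
    exact h ⟨v, mem_playable he hv⟩
  · rintro rfl
    simp [playable]

lemma transversal_nonempty_set (E : Finset (Finset V)) (hne : ∀ e ∈ E, e.Nonempty) :
    ∃ T : Finset V, (∀ e ∈ E, ∃ v ∈ T, v ∈ e) ∧ T.card = transversalNum E := by
  have hs : {n | ∃ T : Finset V, (∀ e ∈ E, ∃ v ∈ T, v ∈ e) ∧ T.card = n}.Nonempty := by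
    refine ⟨(Finset.univ : Finset V).card, Finset.univ, fun e he => ?_, rfl⟩
    obtain ⟨v, hv⟩ := hne e he
    exact ⟨v, Finset.mem_univ v, hv⟩
  exact Nat.sInf_mem hs

lemma transversalNum_le {E : Finset (Finset V)} {T : Finset V}
    (hT : ∀ e ∈ E, ∃ v ∈ T, v ∈ e) : transversalNum E ≤ T.card :=
  Nat.sInf_le ⟨T, hT, rfl⟩

lemma one_le_tau {E : Finset (Finset V)} (hE : E.Nonempty) (hne : ∀ e ∈ E, e.Nonempty) :
    1 ≤ transversalNum E := by
  obtain ⟨T, hT, hcard⟩ := transversal_nonempty_set E hne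
  obtain ⟨e, he⟩ := hE
  obtain ⟨v, hvT, _⟩ := hT e he
  have : 1 ≤ T.card := Finset.card_pos.mpr ⟨v, hvT⟩
  omega

/-- Upper bounds: the game ends within `2τ-1` / `2τ` moves. -/
lemma gameVal_le_tau : ∀ N (E : Finset (Finset V)), E.card ≤ N → (∀ e ∈ E, e.Nonempty) →
    (E.Nonempty → gameVal true E + 1 ≤ 2 * transversalNum E) ∧
      gameVal false E ≤ 2 * transversalNum E := by
  intro N
  induction N with
  | zero =>
    intro E hcard _
    have : E = ∅ := Finset.card_eq_zero.mp (Nat.le_zero.mp hcard)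
    subst this
    constructor
    · intro h; exact absurd h (by simp)
    · rw [gameVal_of_empty false (by simp [playable])]
      omega
  | succ N ih =>
    intro E hcard hne
    constructor
    · intro hE
      obtain ⟨T, hT, hTcard⟩ := transversal_nonempty_set E hne
      obtain ⟨e, he⟩ := hE
      obtain ⟨v, hvT, hve⟩ := hT e he
      have hvp : v ∈ playable E := mem_playable he hve
      set E' := E.filter (fun e => v ∉ e) with hE'
      have hlt : E'.card < E.card := filter_card_lt hvp
      have hne' : ∀ e ∈ E', e.Nonempty := fun e heE' => hne e (Finset.mem_filter.mp heE').1
      have ihE' := (ih E' (by omega) hne').2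
      -- τ(E') ≤ τ(E) - 1
      have hT' : ∀ f ∈ E', ∃ u ∈ T.erase v, u ∈ f := by
        intro f hf
        rw [Finset.mem_filter] at hf
        obtain ⟨u, huT, huf⟩ := hT f hf.1
        refine ⟨u, Finset.mem_erase.mpr ⟨?_, huT⟩, huf⟩
        rintro rfl; exact hf.2 huf
      have htau' : transversalNum E' ≤ T.card - 1 := by
        have := transversalNum_le hT'
        have := Finset.card_erase_of_mem hvT
        omega
      have h1 : 1 ≤ T.card := Finset.card_pos.mpr ⟨v, hvT⟩
      have h3 := gameVal_true_le hvp
      rw [← hE'] at h3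
      omega
    · by_cases h : (playable E).Nonempty
      · apply gameVal_false_le h
        intro v hv
        set E' := E.filter (fun e => v ∉ e) with hE'
        have hlt : E'.card < E.card := filter_card_lt hv
        have hne' : ∀ e ∈ E', e.Nonempty := fun e heE' => hne e (Finset.mem_filter.mp heE').1
        have hEne : E.Nonempty := by
          rcases Finset.eq_empty_or_nonempty E with rfl | hE
          · exact absurd h (by simp [playable])
          · exact hE
        have htau1 : 1 ≤ transversalNum E := one_le_tau hEne hne
        obtain ⟨T, hT, hTcard⟩ := transversal_nonempty_set E hne
        have htauE' : transversalNum E' ≤ transversalNum E := by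
          have : ∀ f ∈ E', ∃ u ∈ T, u ∈ f := fun f hf => hT f (Finset.mem_filter.mp hf).1
          have := transversalNum_le this
          omega
        rcases Finset.eq_empty_or_nonempty E' with hE'e | hE'ne
        · rw [hE'e, gameVal_of_empty true (by simp [playable])]
          omega
        · have := (ih E' (by omega) hne').1 hE'ne
          omega
      · rw [gameVal_of_empty false h]
        omega

end Corona


namespace Corona

section Lower

variable {U : Type} [Fintype U] [DecidableEq U]
variable (k : ℕ) (X : Finset U) (E₀ : Finset (Finset U)) (A : U → Finset (Finset U))

/-- number of uncovered pendant edges at `x` -/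
def dd (E' : Finset (Finset U)) (x : U) : ℕ := ((A x).filter (· ∈ E')).card

/-- `2a + b` -/
def phi (E' : Finset (Finset U)) : ℕ := ∑ x ∈ X, min (dd A E' x) 2

/-- number of survivors -/
def mu (E' : Finset (Finset U)) : ℕ := ∑ x ∈ X, min (dd A E' x) 1

/-- scaled weight `2^k · Σ 2^{-d(x)}` over `d(x) ≥ 2` -/
def wgt (E' : Finset (Finset U)) : ℕ :=
  ∑ x ∈ X, if 2 ≤ dd A E' x then 2 ^ (k - dd A E' x) else 0

variable {k X E₀ A}

lemma dd_empty (x : U) : dd A (∅ : Finset (Finset U)) x = 0 := by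
  simp [dd]

lemma phi_empty : phi X A (∅ : Finset (Finset U)) = 0 := by
  simp [phi, dd]

lemma dd_le_k (hAcard : ∀ x ∈ X, (A x).card = k) {x : U} (hx : x ∈ X) {E' : Finset (Finset U)} :
    dd A E' x ≤ k := by
  rw [← hAcard x hx]
  exact Finset.card_filter_le _ _

lemma dd_filter_eq {E' : Finset (Finset U)} {v : U} {y : U}
    (hv : ∀ f ∈ A y, v ∉ f) :
    dd A (E'.filter (fun e => v ∉ e)) y = dd A E' y := by
  unfold dd
  congr 1
  ext f
  simp only [Finset.mem_filter]
  constructor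
  · rintro ⟨h1, h2, _⟩; exact ⟨h1, h2⟩
  · rintro ⟨h1, h2⟩; exact ⟨h1, h2, hv f h1⟩

lemma dd_filter_self (hAmem : ∀ x ∈ X, ∀ f ∈ A x, x ∈ f ∧ 2 ≤ f.card)
    {x : U} (hx : x ∈ X) {E' : Finset (Finset U)} :
    dd A (E'.filter (fun e => x ∉ e)) x = 0 := by
  unfold dd
  rw [Finset.card_eq_zero]
  rw [Finset.eq_empty_iff_forall_notMem]
  intro f hf
  simp only [Finset.mem_filter] at hf
  exact hf.2.2 ((hAmem x hx f hf.1).1)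

lemma dd_filter_dec
    (hAnew : ∀ x ∈ X, ∀ f ∈ A x, ∀ w ∈ f, w ≠ x →
      w ∉ X ∧ (∀ e ∈ E₀, w ∉ e) ∧ ∀ y ∈ X, ∀ g ∈ A y, w ∈ g → y = x ∧ g = f)
    {x v : U} {f₀ : Finset U} {E' : Finset (Finset U)}
    (hx : x ∈ X) (hf : f₀ ∈ A x) (hfE : f₀ ∈ E') (hv : v ∈ f₀) (hvx : v ≠ x) :
    dd A (E'.filter (fun e => v ∉ e)) x = dd A E' x - 1 := by
  have key := (hAnew x hx f₀ hf v hv hvx).2.2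
  unfold dd
  have hset : (A x).filter (· ∈ E'.filter (fun e => v ∉ e)) =
      ((A x).filter (· ∈ E')).erase f₀ := by
    ext g
    simp only [Finset.mem_filter, Finset.mem_erase]
    constructor
    · rintro ⟨hg, hgE, hvg⟩
      exact ⟨fun hgf => hvg (hgf ▸ hv), hg, hgE⟩
    · rintro ⟨hgf, hg, hgE⟩
      refine ⟨hg, hgE, fun hvg => hgf ?_⟩
      exact (key x hx g hg hvg).2
  rw [hset, Finset.card_erase_of_mem (Finset.mem_filter.mpr ⟨hf, hfE⟩)]

/-- classification of playable moves -/
lemma move_cases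
    (hE₀ : ∀ e ∈ E₀, e.Nonempty ∧ e ⊆ X)
    {E' : Finset (Finset U)} (hsub : E' ⊆ E₀ ∪ X.biUnion A)
    {v : U} (hv : v ∈ playable E') :
    v ∈ X ∨ ∃ x ∈ X, ∃ f₀ ∈ A x, v ∈ f₀ ∧ v ≠ x ∧ f₀ ∈ E' := by
  by_cases hvX : v ∈ X
  · exact Or.inl hvX
  · right
    simp only [playable, Finset.mem_filter, Finset.mem_univ, true_and] at hv
    obtain ⟨e, he, hve⟩ := hv
    rcases Finset.mem_union.mp (hsub he) with h0 | hb
    · exact absurd ((hE₀ e h0).2 hve) hvX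
    · obtain ⟨x, hxX, hex⟩ := Finset.mem_biUnion.mp hb
      refine ⟨x, hxX, e, hex, hve, ?_, he⟩
      rintro rfl; exact hvX hxX

/-- generic one-point sum exchange -/
lemma sum_swap {E' E'' : Finset (Finset U)} (g : ℕ → ℕ) {x : U} (hx : x ∈ X)
    (h : ∀ y ∈ X, y ≠ x → dd A E'' y = dd A E' y) :
    (∑ y ∈ X, g (dd A E'' y)) + g (dd A E' x) =
      (∑ y ∈ X, g (dd A E' y)) + g (dd A E'' x) := by
  rw [← Finset.add_sum_erase _ _ hx, ← Finset.add_sum_erase _ (fun y => g (dd A E' y)) hx]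
  have : ∑ y ∈ X.erase x, g (dd A E'' y) = ∑ y ∈ X.erase x, g (dd A E' y) := by
    apply Finset.sum_congr rfl
    intro y hy
    rw [h y (Finset.mem_of_mem_erase hy) (Finset.ne_of_mem_erase hy)]
  omega

lemma phi_eq_mu_add (E' : Finset (Finset U)) :
    phi X A E' = mu X A E' + (X.filter (fun x => 2 ≤ dd A E' x)).card := by
  unfold phi mu
  rw [Finset.card_filter, ← Finset.sum_add_distrib]
  apply Finset.sum_congr rfl
  intro x _
  by_cases h : 2 ≤ dd A E' x
  · rw [if_pos h]; omega
  · rw [if_neg h]; omega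

lemma wgt_const {E' : Finset (Finset U)}
    (h : ∀ y ∈ X.filter (fun x => 2 ≤ dd A E' x), dd A E' y = 2) :
    wgt k X A E' = (X.filter (fun x => 2 ≤ dd A E' x)).card * 2 ^ (k - 2) := by
  unfold wgt
  rw [← Finset.sum_filter]
  rw [Finset.sum_congr rfl (fun y hy => by rw [h y hy])]
  rw [Finset.sum_const, smul_eq_mul]

lemma dvd_wgt (hAcard : ∀ x ∈ X, (A x).card = k) {E' : Finset (Finset U)} {D : ℕ}
    (hmax : ∀ y ∈ X, 2 ≤ dd A E' y → dd A E' y ≤ D) :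
    2 ^ (k - D) ∣ wgt k X A E' := by
  apply Finset.dvd_sum
  intro y hy
  by_cases h : 2 ≤ dd A E' y
  · rw [if_pos h]
    exact pow_dvd_pow 2 (Nat.sub_le_sub_left (hmax y hy h) k)
  · rw [if_neg h]; exact dvd_zero _

lemma exists_leaf (hAmem : ∀ x ∈ X, ∀ f ∈ A x, x ∈ f ∧ 2 ≤ f.card)
    {x : U} (hx : x ∈ X) {E' : Finset (Finset U)} (hd : 1 ≤ dd A E' x) :
    ∃ f₀ ∈ A x, f₀ ∈ E' ∧ ∃ w ∈ f₀, w ≠ x := by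
  have : ((A x).filter (· ∈ E')).Nonempty := Finset.card_pos.mp hd
  obtain ⟨f₀, hf₀⟩ := this
  rw [Finset.mem_filter] at hf₀
  obtain ⟨w, hwf, hwx⟩ := Finset.exists_mem_ne
    (lt_of_lt_of_le one_lt_two (hAmem x hx f₀ hf₀.1).2) x
  exact ⟨f₀, hf₀.1, hf₀.2, w, hwf, hwx⟩


lemma phi_swap {E' E'' : Finset (Finset U)} {x : U} (hx : x ∈ X)
    (h : ∀ y ∈ X, y ≠ x → dd A E'' y = dd A E' y) :
    phi X A E'' + min (dd A E' x) 2 = phi X A E' + min (dd A E'' x) 2 :=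
  sum_swap (fun n => min n 2) hx h

lemma mu_swap {E' E'' : Finset (Finset U)} {x : U} (hx : x ∈ X)
    (h : ∀ y ∈ X, y ≠ x → dd A E'' y = dd A E' y) :
    mu X A E'' + min (dd A E' x) 1 = mu X A E' + min (dd A E'' x) 1 :=
  sum_swap (fun n => min n 1) hx h

lemma wgt_swap {E' E'' : Finset (Finset U)} {x : U} (hx : x ∈ X)
    (h : ∀ y ∈ X, y ≠ x → dd A E'' y = dd A E' y) :
    wgt k X A E'' + (if 2 ≤ dd A E' x then 2 ^ (k - dd A E' x) else 0) =
      wgt k X A E' + (if 2 ≤ dd A E'' x then 2 ^ (k - dd A E'' x) else 0) :=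
  sum_swap (fun n => if 2 ≤ n then 2 ^ (k - n) else 0) hx h

lemma edge_nonempty
    (hE₀ : ∀ e ∈ E₀, e.Nonempty ∧ e ⊆ X)
    (hAmem : ∀ x ∈ X, ∀ f ∈ A x, x ∈ f ∧ 2 ≤ f.card)
    {e : Finset U} (he : e ∈ E₀ ∪ X.biUnion A) : e.Nonempty := by
  rcases Finset.mem_union.mp he with h0 | hb
  · exact (hE₀ e h0).1
  · obtain ⟨x, hxX, hex⟩ := Finset.mem_biUnion.mp hb
    exact ⟨x, (hAmem x hxX e hex).1⟩

lemma move_facts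
    (hE₀ : ∀ e ∈ E₀, e.Nonempty ∧ e ⊆ X)
    (hAmem : ∀ x ∈ X, ∀ f ∈ A x, x ∈ f ∧ 2 ≤ f.card)
    (hAnew : ∀ x ∈ X, ∀ f ∈ A x, ∀ w ∈ f, w ≠ x →
      w ∉ X ∧ (∀ e ∈ E₀, w ∉ e) ∧ ∀ y ∈ X, ∀ g ∈ A y, w ∈ g → y = x ∧ g = f)
    {E' : Finset (Finset U)} (hsub : E' ⊆ E₀ ∪ X.biUnion A)
    {v : U} (hv : v ∈ playable E') :
    ∃ x ∈ X, (∀ y ∈ X, y ≠ x → dd A (E'.filter (fun e => v ∉ e)) y = dd A E' y) ∧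
      (dd A (E'.filter (fun e => v ∉ e)) x = 0 ∨
        (1 ≤ dd A E' x ∧ dd A (E'.filter (fun e => v ∉ e)) x = dd A E' x - 1)) := by
  rcases move_cases hE₀ hsub hv with hvX | ⟨x, hxX, f₀, hf₀, hvf₀, hvx, hf₀E⟩
  · refine ⟨v, hvX, ?_, Or.inl (dd_filter_self hAmem hvX)⟩
    intro y hyX hyv
    apply dd_filter_eq
    intro f hf hvf
    exact ((hAnew y hyX f hf v hvf (Ne.symm hyv)).1) hvX
  · have key := (hAnew x hxX f₀ hf₀ v hvf₀ hvx).2.2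
    refine ⟨x, hxX, ?_, Or.inr ⟨?_, dd_filter_dec hAnew hxX hf₀ hf₀E hvf₀ hvx⟩⟩
    · intro y hyX hyx
      apply dd_filter_eq
      intro f hf hvf
      exact hyx (key y hyX f hf hvf).1
    · have h1 : f₀ ∈ (A x).filter (· ∈ E') := Finset.mem_filter.mpr ⟨hf₀, hf₀E⟩
      exact Finset.card_pos.mpr ⟨f₀, h1⟩

lemma mu_le_gameVal
    (hE₀ : ∀ e ∈ E₀, e.Nonempty ∧ e ⊆ X)
    (hAmem : ∀ x ∈ X, ∀ f ∈ A x, x ∈ f ∧ 2 ≤ f.card)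
    (hAnew : ∀ x ∈ X, ∀ f ∈ A x, ∀ w ∈ f, w ≠ x →
      w ∉ X ∧ (∀ e ∈ E₀, w ∉ e) ∧ ∀ y ∈ X, ∀ g ∈ A y, w ∈ g → y = x ∧ g = f) :
    ∀ N (E' : Finset (Finset U)), E'.card ≤ N →
    E' ⊆ E₀ ∪ X.biUnion A → ∀ t, mu X A E' ≤ gameVal t E' := by
  intro N
  induction N with
  | zero =>
    intro E' hcard _ t
    have : E' = ∅ := Finset.card_eq_zero.mp (Nat.le_zero.mp hcard)
    subst this
    simp [mu, dd]
  | succ N ih =>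
    intro E' hcard hsub t
    by_cases h : (playable E').Nonempty
    · apply le_gameVal t h
      intro v hv
      set E'' := E'.filter (fun e => v ∉ e) with hE''
      have hlt : E''.card < E'.card := filter_card_lt hv
      have hsub'' : E'' ⊆ E₀ ∪ X.biUnion A :=
        fun e he => hsub (Finset.mem_filter.mp he).1
      have hih := ih E'' (by omega) hsub'' (!t)
      obtain ⟨x, hxX, hother, hcase⟩ := move_facts hE₀ hAmem hAnew hsub hv
      rw [← hE''] at hother hcase
      have hswap := mu_swap hxX hother
      have h1 : min (dd A E' x) 1 ≤ 1 := by omega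
      rcases hcase with h0 | ⟨_, hdec⟩
      · rw [h0] at hswap; omega
      · rw [hdec] at hswap
        have h2 : min (dd A E' x - 1) 1 + 1 ≥ min (dd A E' x) 1 := by omega
        omega
    · rw [playable_empty_iff (fun e he => edge_nonempty hE₀ hAmem (hsub he))] at h
      subst h
      simp [mu, dd, gameVal_of_empty]

lemma main_lower
    (hE₀ : ∀ e ∈ E₀, e.Nonempty ∧ e ⊆ X)
    (hAcard : ∀ x ∈ X, (A x).card = k)
    (hAmem : ∀ x ∈ X, ∀ f ∈ A x, x ∈ f ∧ 2 ≤ f.card)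
    (hAnew : ∀ x ∈ X, ∀ f ∈ A x, ∀ w ∈ f, w ≠ x →
      w ∉ X ∧ (∀ e ∈ E₀, w ∉ e) ∧ ∀ y ∈ X, ∀ g ∈ A y, w ∈ g → y = x ∧ g = f) :
    ∀ N (E' : Finset (Finset U)), E'.card ≤ N →
    E' ⊆ E₀ ∪ X.biUnion A → ∀ r : ℕ,
    (wgt k X A E' ≤ (r+1) * 2 ^ (k-1) → phi X A E' ≤ gameVal true E' + (1+r)) ∧
    (wgt k X A E' + 1 ≤ (r+1) * 2 ^ (k-1) → phi X A E' ≤ gameVal false E' + r) := by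
  intro N
  induction N with
  | zero =>
    intro E' hcard _ r
    have : E' = ∅ := Finset.card_eq_zero.mp (Nat.le_zero.mp hcard)
    subst this
    constructor <;> intro _ <;> simp [phi, dd]
  | succ N ih =>
    intro E' hcard hsub r
    have hedges : ∀ e ∈ E', e.Nonempty := fun e he => edge_nonempty hE₀ hAmem (hsub he)
    have hpow1 : 1 ≤ 2 ^ (k-1) := Nat.one_le_two_pow
    constructor
    · -- Edge-hitter to move
      intro hW
      by_cases h : (playable E').Nonempty
      · have key : ∀ v ∈ playable E',
            phi X A E' ≤ (1 + gameVal false (E'.filter (fun e => v ∉ e))) + (1+r) := by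
          intro v hv
          set E'' := E'.filter (fun e => v ∉ e) with hE''
          have hlt : E''.card < E'.card := filter_card_lt hv
          have hsub'' : E'' ⊆ E₀ ∪ X.biUnion A :=
            fun e he => hsub (Finset.mem_filter.mp he).1
          obtain ⟨x, hxX, hother, hcase⟩ := move_facts hE₀ hAmem hAnew hsub hv
          rw [← hE''] at hother hcase
          have hswapPhi := phi_swap hxX hother
          have hswapW := wgt_swap (k := k) hxX hother
          have hdk : dd A E' x ≤ k := dd_le_k hAcard hxX
          rcases hcase with h0 | ⟨hd1, hdec⟩
          · -- dd'' x = 0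
            rw [h0] at hswapPhi hswapW
            rw [if_neg (by omega : ¬ (2:ℕ) ≤ 0)] at hswapW
            by_cases hd2 : 2 ≤ dd A E' x
            · rw [if_pos hd2] at hswapW
              have hpos : 1 ≤ 2 ^ (k - dd A E' x) := Nat.one_le_two_pow
              have hWcond : wgt k X A E'' + 1 ≤ (r+1) * 2 ^ (k-1) := by omega
              have hih := (ih E'' (by omega) hsub'' r).2 hWcond
              have hb : min (dd A E' x) 2 ≤ 2 := by omega
              omega
            · rw [if_neg hd2] at hswapW
              have hWcond : wgt k X A E'' + 1 ≤ (r+2) * 2 ^ (k-1) := by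
                have : (r+2) * 2 ^ (k-1) = (r+1) * 2 ^ (k-1) + 2 ^ (k-1) := by ring
                omega
              have hih := (ih E'' (by omega) hsub'' (r+1)).2 hWcond
              have hb : min (dd A E' x) 2 ≤ 1 := by omega
              omega
          · -- dd'' x = dd x - 1
            rw [hdec] at hswapPhi hswapW
            rcases Nat.lt_or_ge (dd A E' x) 2 with hd2 | hd2
            · -- d = 1
              have hd1' : dd A E' x = 1 := by omega
              rw [hd1'] at hswapPhi hswapW
              rw [if_neg (by omega : ¬ (2:ℕ) ≤ 1), if_neg (by omega : ¬ (2:ℕ) ≤ 1 - 1)]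
                at hswapW
              have hWcond : wgt k X A E'' + 1 ≤ (r+2) * 2 ^ (k-1) := by
                have : (r+2) * 2 ^ (k-1) = (r+1) * 2 ^ (k-1) + 2 ^ (k-1) := by ring
                omega
              have hih := (ih E'' (by omega) hsub'' (r+1)).2 hWcond
              omega
            · rcases Nat.lt_or_ge (dd A E' x) 3 with hd3 | hd3
              · -- d = 2
                have hd2' : dd A E' x = 2 := by omega
                rw [hd2'] at hswapPhi hswapW
                rw [if_pos (le_refl 2), if_neg (by omega : ¬ (2:ℕ) ≤ 2 - 1)] at hswapW
                have hpos : 1 ≤ 2 ^ (k - 2) := Nat.one_le_two_pow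
                have hWcond : wgt k X A E'' + 1 ≤ (r+1) * 2 ^ (k-1) := by omega
                have hih := (ih E'' (by omega) hsub'' r).2 hWcond
                omega
              · -- d ≥ 3
                have hk3 : 3 ≤ k := le_trans hd3 hdk
                have e1 : k - (dd A E' x - 1) = (k - dd A E' x) + 1 := by omega
                rw [if_pos (by omega : 2 ≤ dd A E' x),
                  if_pos (by omega : 2 ≤ dd A E' x - 1), e1, pow_succ] at hswapW
                have hsmall : 2 ^ (k - dd A E' x) + 1 ≤ 2 ^ (k-1) := by
                  have h1 : 2 ^ (k - dd A E' x) ≤ 2 ^ (k-3) :=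
                    Nat.pow_le_pow_right (by omega) (by omega)
                  have h2 : 2 ^ (k-1) = 2 ^ (k-3) * 4 := by
                    have e2 : k - 1 = (k-3) + 2 := by omega
                    rw [e2, pow_add]
                    norm_num
                  have h3 : 1 ≤ 2 ^ (k-3) := Nat.one_le_two_pow
                  omega
                have hWcond : wgt k X A E'' + 1 ≤ (r+2) * 2 ^ (k-1) := by
                  have : (r+2) * 2 ^ (k-1) = (r+1) * 2 ^ (k-1) + 2 ^ (k-1) := by ring
                  omega
                have hih := (ih E'' (by omega) hsub'' (r+1)).2 hWcond
                have hb1 : min (dd A E' x) 2 = 2 := by omega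
                have hb2 : min (dd A E' x - 1) 2 = 2 := by omega
                omega
        have hc := le_gameVal true h (phi X A E' - (1+r))
          (fun v hv => by
            have hk := key v hv
            simp only [Bool.not_true]
            omega)
        omega
      · rw [playable_empty_iff hedges] at h
        subst h
        simp [phi, dd]
    · -- Staller to move
      intro hW
      set S2 := X.filter (fun x => 2 ≤ dd A E' x) with hS2
      rcases Finset.eq_empty_or_nonempty S2 with hS2e | hS2ne
      · have hphi : phi X A E' = mu X A E' := by
          rw [phi_eq_mu_add, ← hS2, hS2e]
          simp
        have := mu_le_gameVal hE₀ hAmem hAnew (E'.card) E' le_rfl hsub false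
        omega
      · obtain ⟨x, hxS2, hxmax⟩ := Finset.exists_max_image S2 (fun y => dd A E' y) hS2ne
        rw [hS2, Finset.mem_filter] at hxS2
        obtain ⟨hxX, hd2⟩ := hxS2
        obtain ⟨f₀, hf₀, hf₀E, w, hwf, hwx⟩ := exists_leaf hAmem hxX (E' := E') (by omega)
        have hwp : w ∈ playable E' := mem_playable hf₀E hwf
        set E'' := E'.filter (fun e => w ∉ e) with hE''
        have hlt : E''.card < E'.card := filter_card_lt hwp
        have hsub'' : E'' ⊆ E₀ ∪ X.biUnion A :=
          fun e he => hsub (Finset.mem_filter.mp he).1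
        have hgv := le_gameVal_false hwp
        rw [← hE''] at hgv
        have hdec : dd A E'' x = dd A E' x - 1 := dd_filter_dec hAnew hxX hf₀ hf₀E hwf hwx
        have hother : ∀ y ∈ X, y ≠ x → dd A E'' y = dd A E' y := by
          intro y hyX hyx
          apply dd_filter_eq
          intro f hf hvf
          exact hyx ((hAnew x hxX f₀ hf₀ w hwf hwx).2.2 y hyX f hf hvf).1
        have hswapPhi := phi_swap hxX hother
        have hswapW := wgt_swap (k := k) hxX hother
        have hdk : dd A E' x ≤ k := dd_le_k hAcard hxX
        have hk2 : 2 ≤ k := le_trans hd2 hdk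
        rcases Nat.lt_or_ge (dd A E' x) 3 with hd3 | hd3
        · -- max degree = 2
          have hd2' : dd A E' x = 2 := by omega
          have hall : ∀ y ∈ S2, dd A E' y = 2 := by
            intro y hy
            have h1 := hxmax y hy
            rw [hS2, Finset.mem_filter] at hy
            omega
          have hwgt : wgt k X A E' = S2.card * 2 ^ (k-2) := by
            rw [wgt_const (by rw [← hS2]; exact hall), ← hS2]
          have hpos : 1 ≤ 2 ^ (k - 2) := Nat.one_le_two_pow
          have h21 : 2 ^ (k-1) = 2 ^ (k-2) * 2 := by
            rw [← pow_succ]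
            congr 1
            omega
          rcases Nat.eq_zero_or_pos r with rfl | hr
          · -- r = 0 : S2.card = 1
            have hcard1 : 1 ≤ S2.card := Finset.card_pos.mpr hS2ne
            have ha1 : S2.card = 1 := by
              by_contra hne
              have h2le : 2 ≤ S2.card := by omega
              have := Nat.mul_le_mul_right (2 ^ (k-2)) h2le
              omega
            have hphi : phi X A E' = mu X A E' + 1 := by
              rw [phi_eq_mu_add, ← hS2, ha1]
            have hswapMu := mu_swap hxX hother
            rw [hdec, hd2'] at hswapMu
            have hmu := mu_le_gameVal hE₀ hAmem hAnew (E''.card) E'' le_rfl hsub'' true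
            omega
          · -- r ≥ 1
            obtain ⟨s, rfl⟩ : ∃ s, r = s + 1 := ⟨r - 1, by omega⟩
            have hcard1 : 1 ≤ S2.card := Finset.card_pos.mpr hS2ne
            have hacard : S2.card ≤ 2*(s+1) + 1 := by
              by_contra hne
              have h2le : 2*(s+1) + 2 ≤ S2.card := by omega
              have hmul := Nat.mul_le_mul_right (2 ^ (k-2)) h2le
              have heq : (s+1+1) * 2 ^ (k-1) = (2*(s+1)+2) * 2 ^ (k-2) := by
                rw [h21]; ring
              omega
            rw [hdec, hd2'] at hswapPhi hswapW
            rw [if_pos (le_refl 2), if_neg (by omega : ¬ (2:ℕ) ≤ 2 - 1)] at hswapW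
            have hWcond : wgt k X A E'' ≤ (s+1) * 2 ^ (k-1) := by
              have heq : (s+1) * 2 ^ (k-1) = (2*(s+1)) * 2 ^ (k-2) := by
                rw [h21]; ring
              have hpo : (2*(s+1)+1) * 2 ^ (k-2) = (2*(s+1)) * 2 ^ (k-2) + 2 ^ (k-2) := by
                ring
              have hww : wgt k X A E'' + 2 ^ (k-2) = S2.card * 2 ^ (k-2) := by omega
              have hmul := Nat.mul_le_mul_right (2 ^ (k-2)) hacard
              omega
            have hih := (ih E'' (by omega) hsub'' s).1 hWcond
            omega
        · -- max degree ≥ 3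
          have hdvd : 2 ^ (k - dd A E' x) ∣ wgt k X A E' := by
            apply dvd_wgt hAcard
            intro y hyX hy2
            exact hxmax y (by rw [hS2, Finset.mem_filter]; exact ⟨hyX, hy2⟩)
          have hdvdM : 2 ^ (k - dd A E' x) ∣ (r+1) * 2 ^ (k-1) :=
            Dvd.dvd.mul_left (pow_dvd_pow 2 (by omega)) _
          have hstep : wgt k X A E' + 2 ^ (k - dd A E' x) ≤ (r+1) * 2 ^ (k-1) := by
            have hpos : 0 < (r+1) * 2 ^ (k-1) - wgt k X A E' := by omega
            have hdvd3 : 2 ^ (k - dd A E' x) ∣ ((r+1) * 2 ^ (k-1) - wgt k X A E') :=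
              Nat.dvd_sub hdvdM hdvd
            have := Nat.le_of_dvd hpos hdvd3
            omega
          rw [hdec] at hswapPhi hswapW
          have e1 : k - (dd A E' x - 1) = (k - dd A E' x) + 1 := by omega
          rw [if_pos (by omega : 2 ≤ dd A E' x),
            if_pos (by omega : 2 ≤ dd A E' x - 1), e1, pow_succ] at hswapW
          have hWcond : wgt k X A E'' ≤ (r+1) * 2 ^ (k-1) := by omega
          have hih := (ih E'' (by omega) hsub'' r).1 hWcond
          have hb1 : min (dd A E' x) 2 = 2 := by omega
          have hb2 : min (dd A E' x - 1) 2 = 2 := by omega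
          omega

end Lower

end Corona

/-- Let `H` be a hypergraph with vertex set `X` and edge set `E₀`, of order
`n = |X| ≤ 2^(k-1) - 1`, and let `H^k` be a `k`-corona of `H`: to each vertex `x ∈ X`
we attach `k` hyperedges (the members of `A x`), each of size at least `2`, containing
`x` and otherwise only new vertices of degree `1`.  Then
`τ_g(H^k) = 2τ(H^k) - 1 = 2n - 1` and `τ_g'(H^k) = 2τ(H^k) = 2n`. -/
theorem corona_gameTransversalNum
    {W : Type} [Fintype W] [DecidableEq W]
    (k : ℕ) (hk : 1 ≤ k)
    (X : Finset W) (E₀ : Finset (Finset W))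
    (hE₀ : ∀ e ∈ E₀, e.Nonempty ∧ e ⊆ X)
    (A : W → Finset (Finset W))
    (hAcard : ∀ x ∈ X, (A x).card = k)
    (hAmem : ∀ x ∈ X, ∀ f ∈ A x, x ∈ f ∧ 2 ≤ f.card)
    (hAnew : ∀ x ∈ X, ∀ f ∈ A x, ∀ w ∈ f, w ≠ x →
      w ∉ X ∧ (∀ e ∈ E₀, w ∉ e) ∧
        ∀ y ∈ X, ∀ g ∈ A y, w ∈ g → y = x ∧ g = f)
    (hn : X.card ≤ 2 ^ (k - 1) - 1) :
    gameTransversalNum (E₀ ∪ X.biUnion A) =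
        2 * transversalNum (E₀ ∪ X.biUnion A) - 1 ∧
      gameTransversalNum (E₀ ∪ X.biUnion A) = 2 * X.card - 1 ∧
      stallerGameTransversalNum (E₀ ∪ X.biUnion A) =
        2 * transversalNum (E₀ ∪ X.biUnion A) ∧
      stallerGameTransversalNum (E₀ ∪ X.biUnion A) = 2 * X.card := by
  classical
  rcases Finset.eq_empty_or_nonempty X with rfl | hX
  · -- degenerate case `n = 0`
    have hE0 : E₀ = ∅ := by
      rw [Finset.eq_empty_iff_forall_notMem]
      intro e he
      obtain ⟨v, hv⟩ := (hE₀ e he).1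
      exact absurd ((hE₀ e he).2 hv) (by simp)
    subst hE0
    have hF : (∅ : Finset (Finset W)) ∪ (∅ : Finset W).biUnion A = ∅ := by simp
    rw [hF]
    have hgv : ∀ t, gameVal t (∅ : Finset (Finset W)) = 0 := fun t =>
      Corona.gameVal_of_empty t (by simp [playable])
    have htau : transversalNum (∅ : Finset (Finset W)) = 0 :=
      Nat.sInf_eq_zero.mpr (Or.inl ⟨∅, by simp⟩)
    unfold gameTransversalNum stallerGameTransversalNum
    rw [htau, hgv, hgv]
    simp
  · -- main case `n ≥ 1`
    set F := E₀ ∪ X.biUnion A with hFdef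
    have hn1 : 1 ≤ X.card := Finset.card_pos.mpr hX
    have hk2 : 2 ≤ k := by
      rcases Nat.lt_or_ge k 2 with h | h
      · interval_cases k <;> simp_all
      · exact h
    have hpow2 : 2 ≤ 2 ^ (k-1) := by
      calc (2:ℕ) = 2 ^ 1 := rfl
      _ ≤ 2 ^ (k-1) := Nat.pow_le_pow_right (by omega) (by omega)
    have hedges : ∀ e ∈ F, e.Nonempty := fun e he => Corona.edge_nonempty hE₀ hAmem he
    -- pendant edges are in F
    have hpend : ∀ x ∈ X, ∀ f ∈ A x, f ∈ F := by
      intro x hx f hf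
      exact Finset.mem_union_right _ (Finset.mem_biUnion.mpr ⟨x, hx, hf⟩)
    have hFne : F.Nonempty := by
      obtain ⟨x, hx⟩ := hX
      have : (A x).Nonempty := Finset.card_pos.mp (by rw [hAcard x hx]; omega)
      obtain ⟨f, hf⟩ := this
      exact ⟨f, hpend x hx f hf⟩
    -- the degree of every `x ∈ X` in the full corona is `k`
    have hddfull : ∀ x ∈ X, Corona.dd A F x = k := by
      intro x hx
      unfold Corona.dd
      rw [Finset.filter_true_of_mem (fun f hf => hpend x hx f hf), hAcard x hx]
    have hphiF : Corona.phi X A F = 2 * X.card := by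
      unfold Corona.phi
      rw [Finset.sum_congr rfl (fun x hx => by
        rw [hddfull x hx, min_eq_right (by omega : 2 ≤ k)])]
      rw [Finset.sum_const, smul_eq_mul]
      ring
    have hwgtF : Corona.wgt k X A F = X.card := by
      unfold Corona.wgt
      rw [Finset.sum_congr rfl (fun x hx => by
        rw [hddfull x hx, if_pos hk2, Nat.sub_self, pow_zero])]
      rw [Finset.sum_const, smul_eq_mul, mul_one]
    -- τ = n
    have htau_le : transversalNum F ≤ X.card := by
      apply Corona.transversalNum_le
      intro e he
      rcases Finset.mem_union.mp he with h0 | hb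
      · obtain ⟨v, hv⟩ := (hE₀ e h0).1
        exact ⟨v, (hE₀ e h0).2 hv, hv⟩
      · obtain ⟨x, hx, hex⟩ := Finset.mem_biUnion.mp hb
        exact ⟨x, hx, (hAmem x hx e hex).1⟩
    have htau_ge : X.card ≤ transversalNum F := by
      obtain ⟨T, hT, hTcard⟩ := Corona.transversal_nonempty_set F hedges
      rw [← hTcard]
      have hpick : ∀ x : W, ∃ p : W × Finset W,
          x ∈ X → p.1 ∈ T ∧ p.2 ∈ A x ∧ p.1 ∈ p.2 := by
        intro x
        by_cases hx : x ∈ X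
        · have : (A x).Nonempty := Finset.card_pos.mp (by rw [hAcard x hx]; omega)
          obtain ⟨f, hf⟩ := this
          obtain ⟨t, htT, htf⟩ := hT f (hpend x hx f hf)
          exact ⟨(t, f), fun _ => ⟨htT, hf, htf⟩⟩
        · exact ⟨(x, ∅), fun h => absurd h hx⟩
      choose p hp using hpick
      apply Finset.card_le_card_of_injOn (fun x => (p x).1)
        (fun x hx => (hp x hx).1)
      intro x1 hx1 x2 hx2 heq
      rw [Finset.mem_coe] at hx1 hx2
      have heq' : (p x1).1 = (p x2).1 := heq
      obtain ⟨_, hf1, htf1⟩ := hp x1 hx1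
      obtain ⟨_, hf2, htf2⟩ := hp x2 hx2
      by_contra hne
      by_cases ht1 : (p x1).1 = x1
      · -- the chosen vertex is `x1` itself, lying in a pendant edge of `x2`
        have hx1f2 : x1 ∈ (p x2).2 := by rw [← ht1, heq']; exact htf2
        have : x1 ≠ x2 := hne
        exact (hAnew x2 hx2 (p x2).2 hf2 x1 hx1f2 this).1 hx1
      · have := ((hAnew x1 hx1 (p x1).2 hf1 (p x1).1 htf1 ht1).2.2
          x2 hx2 (p x2).2 hf2 (by rw [heq']; exact htf2)).1
        exact hne this.symm
    have htau : transversalNum F = X.card := le_antisymm htau_le htau_ge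
    -- lower bounds
    have hlow := Corona.main_lower hE₀ hAcard hAmem hAnew F.card F le_rfl
      (le_refl F) 0
    have hW1 : Corona.wgt k X A F ≤ (0+1) * 2 ^ (k-1) := by
      rw [hwgtF]
      omega
    have hW2 : Corona.wgt k X A F + 1 ≤ (0+1) * 2 ^ (k-1) := by
      rw [hwgtF]
      omega
    have hlow1 := hlow.1 hW1
    have hlow2 := hlow.2 hW2
    rw [hphiF] at hlow1 hlow2
    -- upper bounds
    have hup := Corona.gameVal_le_tau F.card F le_rfl hedges
    have hup1 := hup.1 hFne
    have hup2 := hup.2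
    rw [htau] at hup1 hup2
    unfold gameTransversalNum stallerGameTransversalNum
    rw [htau]
    omega
end

section
/- If H is a 3-uniform hypergraph, then 48 τ_g(H) ≤ 15 n_{≥3}(H) + 14 n_2(H) + 11 n_1(H) + 15 m(H), where n_{≥3}(H), n_2(H), n_1(H) denote the number of vertices of H of degree at least 3, of degree exactly 2, and of degree exactly 1, respectively. -/
variable {V : Type} [Fintype V] [DecidableEq V]

set_option linter.unusedSectionVars false

namespace TG
open Finset



def del (E : Finset (Finset V)) (v : V) : Finset (Finset V) := E.filter (fun e => v ∉ e)

def deg (E : Finset (Finset V)) (v : V) : ℕ := (E.filter (fun e => v ∈ e)).card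

def om (d : ℕ) : ℕ := if 3 ≤ d then 15 else if d = 2 then 14 else if d = 1 then 11 else 0

def wt (E : Finset (Finset V)) : ℕ := 15 * E.card + ∑ v : V, om (deg E v)

def q2 (E : Finset (Finset V)) : ℕ := (univ.filter (fun v => deg E v = 2)).card

def c6 (x : ℕ) : ℕ := (x + 5) / 6

lemma mem_playable {E : Finset (Finset V)} {v : V} : v ∈ playable E ↔ ∃ e ∈ E, v ∈ e := by
  simp [playable]

lemma playable_nonempty {E : Finset (Finset V)} (h3 : ∀ e ∈ E, e.card = 3) (hE : E.Nonempty) :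
    (playable E).Nonempty := by
  obtain ⟨e, he⟩ := hE
  have : e.Nonempty := Finset.card_pos.mp (by rw [h3 e he]; norm_num)
  obtain ⟨v, hv⟩ := this
  exact ⟨v, mem_playable.mpr ⟨e, he, hv⟩⟩

lemma deg_pos_of_playable {E : Finset (Finset V)} {v : V} (h : v ∈ playable E) :
    1 ≤ deg E v := by
  obtain ⟨e, he, hv⟩ := mem_playable.mp h
  exact Finset.card_pos.mpr ⟨e, Finset.mem_filter.mpr ⟨he, hv⟩⟩

lemma playable_of_deg_pos {E : Finset (Finset V)} {v : V} (h : 1 ≤ deg E v) :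
    v ∈ playable E := by
  obtain ⟨e, he⟩ := Finset.card_pos.mp h
  simp only [Finset.mem_filter] at he
  exact mem_playable.mpr ⟨e, he.1, he.2⟩

lemma gameVal_empty (b : Bool) (h : ¬ (playable (∅ : Finset (Finset V))).Nonempty := by simp [playable]) :
    gameVal b (∅ : Finset (Finset V)) = 0 := by
  rw [gameVal, dif_neg h]

lemma gameVal_true_le {E : Finset (Finset V)} {v : V} (hv : v ∈ playable E) :
    gameVal true E ≤ 1 + gameVal false (del E v) := by
  have h : (playable E).Nonempty := ⟨v, hv⟩
  rw [gameVal, dif_pos h, if_pos rfl]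
  have := Finset.inf'_le (f := fun u : {x // x ∈ playable E} =>
      gameVal (!true) (E.filter (fun e => u.1 ∉ e)))
    (b := (⟨v, hv⟩ : {x // x ∈ playable E})) (Finset.mem_attach _ _)
  exact Nat.add_le_add_left this 1

lemma gameVal_false_le {E : Finset (Finset V)} (h : (playable E).Nonempty) {C K : ℕ}
    (H : ∀ u ∈ playable E, 48 * gameVal true (del E u) + C ≤ K) :
    48 * gameVal false E + C ≤ 48 + K := by
  rw [gameVal, dif_pos h, if_neg (by simp)]
  obtain ⟨u, hu, hequ⟩ := Finset.exists_mem_eq_sup' (Finset.attach_nonempty_iff.mpr h)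
    (fun v : {x // x ∈ playable E} => gameVal (!false) (E.filter (fun e => v.1 ∉ e)))
  rw [hequ]
  have := H u.1 u.2
  simp only [del] at this
  simp only [Bool.not_false] at *
  omega



open Finset


def co (E : Finset (Finset V)) (u v : V) : ℕ := (E.filter (fun e => u ∈ e ∧ v ∈ e)).card

omit [Fintype V] in
lemma card_del_add_deg (E : Finset (Finset V)) (v : V) : (del E v).card + deg E v = E.card := by
  have h := Finset.card_filter_add_card_filter_not (s := E) (p := fun e => v ∈ e)
  have h2 : E.filter (fun e => ¬ v ∈ e) = del E v := rfl
  rw [h2] at h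
  rw [deg]
  omega

omit [Fintype V] in
lemma deg_del_add_co (E : Finset (Finset V)) (u v : V) :
    deg (del E v) u + co E u v = deg E u := by
  have h := Finset.card_filter_add_card_filter_not
    (s := E.filter (fun e => u ∈ e)) (p := fun e => v ∈ e)
  have hA : (E.filter (fun e => u ∈ e)).filter (fun e => v ∈ e)
      = E.filter (fun e => u ∈ e ∧ v ∈ e) := by
    rw [Finset.filter_filter]
  have hB : (E.filter (fun e => u ∈ e)).filter (fun e => ¬ v ∈ e)
      = (del E v).filter (fun e => u ∈ e) := by
    rw [del, Finset.filter_filter, Finset.filter_filter]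
    apply Finset.filter_congr
    intro e _
    tauto
  rw [hA, hB] at h
  rw [deg, deg, co]
  omega

omit [Fintype V] in
lemma deg_del_le (E : Finset (Finset V)) (u v : V) : deg (del E v) u ≤ deg E u := by
  have := deg_del_add_co E u v; omega

omit [Fintype V] in
lemma deg_del_self (E : Finset (Finset V)) (v : V) : deg (del E v) v = 0 := by
  rw [deg, del, Finset.filter_filter]
  simp only [Finset.card_eq_zero]
  apply Finset.filter_false_of_mem
  tauto

lemma om_mono : Monotone om := by
  intro a b h
  unfold om
  split_ifs <;> omega

lemma om_le_15 (d : ℕ) : om d ≤ 15 := by unfold om; split_ifs <;> omega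

lemma sum_improve {T : Finset V} (f g δ : V → ℕ) (h1 : ∀ u ∈ T, f u + δ u ≤ g u)
    (h2 : ∀ u, f u ≤ g u) :
    ∑ v : V, f v + ∑ u ∈ T, δ u ≤ ∑ v : V, g v := by
  classical
  rw [← Finset.sum_add_sum_compl T f, ← Finset.sum_add_sum_compl T g]
  have hT : ∑ u ∈ T, f u + ∑ u ∈ T, δ u ≤ ∑ u ∈ T, g u := by
    rw [← Finset.sum_add_distrib]
    exact Finset.sum_le_sum h1
  have hTc : ∑ u ∈ Tᶜ, f u ≤ ∑ u ∈ Tᶜ, g u := Finset.sum_le_sum (fun u _ => h2 u)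
  omega

lemma drop_ge {E : Finset (Finset V)} {v : V} (T : Finset V) (δ : V → ℕ)
    (h1 : ∀ u ∈ T, om (deg (del E v) u) + δ u ≤ om (deg E u)) :
    wt (del E v) + 15 * deg E v + ∑ u ∈ T, δ u ≤ wt E := by
  unfold wt
  have hc := card_del_add_deg E v
  have hs : ∑ u : V, om (deg (del E v) u) + ∑ u ∈ T, δ u ≤ ∑ u : V, om (deg E u) :=
    sum_improve _ _ δ h1 (fun u => om_mono (deg_del_le E u v))
  omega

lemma deg_sum_eq (E : Finset (Finset V)) (A : Finset V) :
    ∑ v ∈ A, deg E v = ∑ e ∈ E, (e.filter (· ∈ A)).card := by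
  unfold deg
  simp_rw [Finset.card_filter]
  rw [Finset.sum_comm]
  congr 1
  ext e
  rw [← Finset.card_filter, ← Finset.card_filter]
  rw [Finset.filter_mem_eq_inter, Finset.filter_mem_eq_inter, Finset.inter_comm]


open Finset

-- om arithmetic
lemma om_diff {d' d : ℕ} (h : d' ≤ d) (h3 : d ≤ 3) : om d' + (d - d') ≤ om d := by
  unfold om; split_ifs <;> omega

lemma om_diff_plus2 {d' d : ℕ} (h : d' ≤ d) (h3 : d ≤ 3) (h1 : 1 ≤ d - d')
    (hc : d ≤ 2 ∨ 2 ≤ d - d') : om d' + (d - d') + 2 ≤ om d := by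
  unfold om; split_ifs <;> omega

lemma om_one_lt {d : ℕ} (h1 : 1 ≤ d) (h3 : d ≤ 3) : om (d-1) + 1 ≤ om d := by
  unfold om; split_ifs <;> omega

lemma om_one_low {d : ℕ} (h1 : 1 ≤ d) (h2 : d ≤ 2) : om (d-1) + 3 ≤ om d := by
  unfold om; split_ifs <;> omega

omit [Fintype V] in
lemma co_eq_deg_filter (E : Finset (Finset V)) (z u : V) :
    co E z u = ((E.filter (fun e => u ∈ e)).filter (fun e => z ∈ e)).card := by
  rw [co, Finset.filter_filter]
  congr 1
  apply Finset.filter_congr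
  intro e _
  tauto

omit [Fintype V] in
lemma co_pos_of_mem {E : Finset (Finset V)} {f : Finset V} {z u : V}
    (hf : f ∈ E) (hz : z ∈ f) (hu : u ∈ f) : 1 ≤ co E z u :=
  Finset.card_pos.mpr ⟨f, Finset.mem_filter.mpr ⟨hf, hz, hu⟩⟩

omit [Fintype V] in
lemma deg_pos_of_mem_edge {E : Finset (Finset V)} {f : Finset V} {z : V}
    (hf : f ∈ E) (hz : z ∈ f) : 1 ≤ deg E z :=
  Finset.card_pos.mpr ⟨f, Finset.mem_filter.mpr ⟨hf, hz⟩⟩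


-- ------- specific drop lemmas -------

lemma om3 : om 3 = 15 := by decide
lemma om_ge_11 {d : ℕ} (h : 1 ≤ d) : 11 ≤ om d := by unfold om; split_ifs <;> omega

lemma D1 (E : Finset (Finset V)) (v : V) :
    wt (del E v) + 15 * deg E v + om (deg E v) ≤ wt E := by
  have h := drop_ge (E := E) (v := v) {v} (fun z => om (deg E z)) ?_
  · simpa using h
  · intro z hz
    rw [Finset.mem_singleton] at hz
    subst hz
    rw [deg_del_self]
    simp [om]

omit [Fintype V] in
lemma unique_edge {E : Finset (Finset V)} {u : V} {f : Finset V}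
    (hu : deg E u = 1) (hf : f ∈ E) (huf : u ∈ f) :
    E.filter (fun e => u ∈ e) = {f} := by
  obtain ⟨g, hg⟩ := Finset.card_eq_one.mp hu
  have : f ∈ E.filter (fun e => u ∈ e) := Finset.mem_filter.mpr ⟨hf, huf⟩
  rw [hg] at this ⊢
  rw [Finset.mem_singleton] at this
  rw [this]

omit [Fintype V] in
lemma co_deg_one {E : Finset (Finset V)} {u z : V} {f : Finset V}
    (hu : deg E u = 1) (hf : f ∈ E) (huf : u ∈ f) (hz : z ∈ f) :
    co E z u = 1 := by
  rw [co_eq_deg_filter, unique_edge hu hf huf]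
  rw [Finset.filter_singleton, if_pos hz, Finset.card_singleton]

lemma D2base {E : Finset (Finset V)} {u : V} {f : Finset V}
    (hmax : ∀ z, deg E z ≤ 3) (hu : deg E u = 1) (hf : f ∈ E) (huf : u ∈ f)
    (hcard : f.card = 3) : wt (del E u) + 28 ≤ wt E := by
  have h := drop_ge (E := E) (v := u) f (fun z => if z = u then 11 else 1) ?_
  · have hsum : ∑ z ∈ f, (if z = u then 11 else 1) = 13 := by
      rw [← Finset.sum_erase_add _ _ huf, if_pos rfl]
      have : ∑ z ∈ f.erase u, (if z = u then 11 else 1) = ∑ z ∈ f.erase u, 1 := by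
        apply Finset.sum_congr rfl
        intro z hz
        rw [if_neg (Finset.ne_of_mem_erase hz)]
      rw [this, Finset.sum_const, Finset.card_erase_of_mem huf, hcard]
      norm_num
    rw [hsum, hu] at h
    omega
  · intro z hz
    by_cases hzu : z = u
    · subst hzu
      rw [if_pos rfl, deg_del_self, hu]
      simp [om]
    · rw [if_neg hzu]
      have hco := co_deg_one hu hf huf hz
      have hdd := deg_del_add_co E z u
      have h1 : 1 ≤ deg E z := deg_pos_of_mem_edge hf hz
      have := om_one_lt h1 (hmax z)
      have hdel : deg (del E u) z = deg E z - 1 := by omega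
      rw [hdel]
      exact om_one_lt h1 (hmax z)

lemma D2low {E : Finset (Finset V)} {u x0 : V} {f : Finset V}
    (hmax : ∀ z, deg E z ≤ 3) (hu : deg E u = 1) (hf : f ∈ E) (huf : u ∈ f)
    (hcard : f.card = 3) (hx0 : x0 ∈ f) (hx0u : x0 ≠ u) (hlow : deg E x0 ≤ 2) :
    wt (del E u) + 30 ≤ wt E := by
  have h := drop_ge (E := E) (v := u) f
    (fun z => if z = u then 11 else if z = x0 then 3 else 1) ?_
  · have hmem : x0 ∈ f.erase u := Finset.mem_erase.mpr ⟨hx0u, hx0⟩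
    have hsum : ∑ z ∈ f, (if z = u then 11 else if z = x0 then 3 else 1) = 15 := by
      rw [← Finset.sum_erase_add _ _ huf, if_pos rfl]
      rw [← Finset.sum_erase_add _ _ hmem, if_neg hx0u, if_pos rfl]
      have : ∑ z ∈ (f.erase u).erase x0, (if z = u then 11 else if z = x0 then 3 else 1)
          = ∑ _z ∈ (f.erase u).erase x0, 1 := by
        apply Finset.sum_congr rfl
        intro z hz
        rw [if_neg (Finset.ne_of_mem_erase (Finset.mem_of_mem_erase hz) :
            z ≠ u)]
        rw [if_neg (Finset.ne_of_mem_erase hz)]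
      rw [this, Finset.sum_const, Finset.card_erase_of_mem hmem,
        Finset.card_erase_of_mem huf, hcard]
      norm_num
    rw [hsum, hu] at h
    omega
  · intro z hz
    by_cases hzu : z = u
    · subst hzu
      rw [if_pos rfl, deg_del_self, hu]
      simp [om]
    · rw [if_neg hzu]
      have hco := co_deg_one hu hf huf hz
      have hdd := deg_del_add_co E z u
      have h1 : 1 ≤ deg E z := deg_pos_of_mem_edge hf hz
      have hdel : deg (del E u) z = deg E z - 1 := by omega
      rw [hdel]
      by_cases hzx : z = x0
      · subst hzx
        rw [if_pos rfl]
        exact om_one_low h1 hlow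
      · rw [if_neg hzx]
        exact om_one_lt h1 (hmax z)

-- the union of edges through v, minus v
def nbhd (E : Finset (Finset V)) (v : V) : Finset V :=
  ((E.filter (fun e => v ∈ e)).biUnion id).erase v

lemma sum_co_nbhd {E : Finset (Finset V)} {v : V} (h3e : ∀ e ∈ E, e.card = 3) :
    ∑ u ∈ nbhd E v, co E u v = 2 * deg E v := by
  have hco : ∀ u, co E u v = deg (E.filter (fun e => v ∈ e)) u := by
    intro u
    rw [co_eq_deg_filter]
    rfl
  rw [Finset.sum_congr rfl (fun u _ => hco u)]
  rw [deg_sum_eq]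
  have : ∀ e ∈ E.filter (fun e => v ∈ e), (e.filter (· ∈ nbhd E v)).card = 2 := by
    intro e he
    have hve : v ∈ e := (Finset.mem_filter.mp he).2
    have heE : e ∈ E := (Finset.mem_filter.mp he).1
    have hef : e.filter (· ∈ nbhd E v) = e.erase v := by
      ext x
      simp only [Finset.mem_filter, nbhd, Finset.mem_erase, Finset.mem_biUnion, id]
      constructor
      · rintro ⟨hx, hxv, -⟩
        exact ⟨hxv, hx⟩
      · rintro ⟨hxv, hx⟩
        exact ⟨hx, hxv, e, ⟨heE, hve⟩, hx⟩
    rw [hef, Finset.card_erase_of_mem hve, h3e e heE]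
  rw [Finset.sum_congr rfl this, Finset.sum_const, smul_eq_mul, deg, mul_comm]

lemma mem_nbhd_of_co {E : Finset (Finset V)} {v u : V} (hne : u ≠ v)
    (hco : 1 ≤ co E u v) : u ∈ nbhd E v := by
  obtain ⟨e, he⟩ := Finset.card_pos.mp hco
  have heE := (Finset.mem_filter.mp he).1
  have hprop := (Finset.mem_filter.mp he).2
  exact Finset.mem_erase.mpr ⟨hne, Finset.mem_biUnion.mpr
    ⟨e, Finset.mem_filter.mpr ⟨heE, hprop.2⟩, hprop.1⟩⟩

lemma D3 {E : Finset (Finset V)} {v : V} (hmax : ∀ z, deg E z ≤ 3)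
    (h3e : ∀ e ∈ E, e.card = 3) (hv : deg E v = 3) :
    wt (del E v) + 66 ≤ wt E := by
  have hvn : v ∉ nbhd E v := fun h => (Finset.mem_erase.mp h).1 rfl
  have h := drop_ge (E := E) (v := v) (insert v (nbhd E v))
    (fun z => if z = v then 15 else deg E z - deg (del E v) z) ?_
  · rw [Finset.sum_insert hvn, if_pos rfl] at h
    have hsum : ∑ z ∈ nbhd E v, (if z = v then 15 else deg E z - deg (del E v) z)
        = 2 * deg E v := by
      rw [← sum_co_nbhd h3e]
      apply Finset.sum_congr rfl
      intro z hz
      rw [if_neg (Finset.mem_erase.mp hz).1]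
      have := deg_del_add_co E z v
      omega
    rw [hsum, hv] at h
    omega
  · intro z hz
    rcases Finset.mem_insert.mp hz with hzv | hzn
    · subst hzv
      rw [if_pos rfl, deg_del_self, hv, om3]
      simp [om]
    · rw [if_neg (Finset.mem_erase.mp hzn).1]
      exact om_diff (deg_del_le E z v) (hmax z)

lemma D68 {E : Finset (Finset V)} {v u0 : V} (hmax : ∀ z, deg E z ≤ 3)
    (h3e : ∀ e ∈ E, e.card = 3) (hv : deg E v = 3) (hne : u0 ≠ v)
    (hco : 1 ≤ co E u0 v) (hcase : deg E u0 ≤ 2 ∨ 2 ≤ co E u0 v) :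
    wt (del E v) + 68 ≤ wt E := by
  have hvn : v ∉ nbhd E v := fun h => (Finset.mem_erase.mp h).1 rfl
  have hu0 : u0 ∈ nbhd E v := mem_nbhd_of_co hne hco
  have h := drop_ge (E := E) (v := v) (insert v (nbhd E v))
    (fun z => if z = v then 15 else
      (deg E z - deg (del E v) z) + (if z = u0 then 2 else 0)) ?_
  · rw [Finset.sum_insert hvn, if_pos rfl] at h
    have hsum : ∑ z ∈ nbhd E v,
        (if z = v then 15 else (deg E z - deg (del E v) z) + (if z = u0 then 2 else 0))
        = 2 * deg E v + 2 := by
      have e1 : ∀ z ∈ nbhd E v,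
          (if z = v then 15 else (deg E z - deg (del E v) z) + (if z = u0 then 2 else 0))
          = (deg E z - deg (del E v) z) + (if z = u0 then 2 else 0) := by
        intro z hz
        rw [if_neg (Finset.mem_erase.mp hz).1]
      rw [Finset.sum_congr rfl e1, Finset.sum_add_distrib]
      have e2 : ∑ z ∈ nbhd E v, (deg E z - deg (del E v) z) = 2 * deg E v := by
        rw [← sum_co_nbhd h3e]
        apply Finset.sum_congr rfl
        intro z _
        have := deg_del_add_co E z v
        omega
      have e3 : ∑ z ∈ nbhd E v, (if z = u0 then 2 else 0) = 2 := by
        rw [Finset.sum_ite_eq' (nbhd E v) u0 (fun _ => 2), if_pos hu0]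
      rw [e2, e3]
    rw [hsum, hv] at h
    omega
  · intro z hz
    rcases Finset.mem_insert.mp hz with hzv | hzn
    · subst hzv
      rw [if_pos rfl, deg_del_self, hv, om3]
      simp [om]
    · rw [if_neg (Finset.mem_erase.mp hzn).1]
      have hdd := deg_del_add_co E z v
      by_cases hzu : z = u0
      · subst hzu
        rw [if_pos rfl]
        have : deg E z - deg (del E v) z = co E z v := by omega
        have h2 := om_diff_plus2 (deg_del_le E z v) (hmax z)
          (by omega) (by omega)
        omega
      · rw [if_neg hzu]
        have := om_diff (deg_del_le E z v) (hmax z)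
        omega

lemma wt_pos {E : Finset (Finset V)} (h3e : ∀ e ∈ E, e.card = 3) (hE : E.Nonempty) :
    48 ≤ wt E := by
  obtain ⟨e, he⟩ := hE
  have hsub : e ⊆ Finset.univ := Finset.subset_univ e
  have h1 : ∑ z ∈ e, om (deg E z) ≤ ∑ z : V, om (deg E z) :=
    Finset.sum_le_sum_of_subset hsub
  have h2 : ∀ z ∈ e, 11 ≤ om (deg E z) := fun z hz =>
    om_ge_11 (deg_pos_of_mem_edge he hz)
  have h3 : 33 ≤ ∑ z ∈ e, om (deg E z) := by
    calc (33 : ℕ) = ∑ _z ∈ e, 11 := by rw [Finset.sum_const, h3e e he]; norm_num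
    _ ≤ _ := Finset.sum_le_sum h2
  have hm : 1 ≤ E.card := Finset.card_pos.mpr ⟨e, he⟩
  unfold wt
  omega

-- ------- L-region machinery -------

lemma bnd26 {d : ℕ} (h : 1 ≤ d) : 26 ≤ 15 * d + om d := by unfold om; split_ifs <;> omega
lemma bnd44 {d : ℕ} (h : 2 ≤ d) : 44 ≤ 15 * d + om d := by unfold om; split_ifs <;> omega
lemma bnd75 {d : ℕ} (h : 4 ≤ d) : 75 ≤ 15 * d + om d := by unfold om; split_ifs <;> omega

omit [Fintype V] in
lemma h3_del {E : Finset (Finset V)} (h3e : ∀ e ∈ E, e.card = 3) (v : V) :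
    ∀ e ∈ del E v, e.card = 3 := fun e he => h3e e (Finset.mem_filter.mp he).1

def Wset (E : Finset (Finset V)) (u : V) : Finset V := (E.filter (fun e => u ∈ e)).biUnion id

omit [Fintype V] in
lemma co_zero_of_not_mem_Wset {E : Finset (Finset V)} {u x : V} (h : x ∉ Wset E u) :
    co E x u = 0 := by
  rw [co, Finset.card_eq_zero]
  rw [Finset.eq_empty_iff_forall_notMem]
  intro e he
  rw [Finset.mem_filter] at he
  exact h (Finset.mem_biUnion.mpr ⟨e, Finset.mem_filter.mpr ⟨he.1, he.2.2⟩, he.2.1⟩)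

lemma qdrop {E : Finset (Finset V)} (u : V) :
    q2 E ≤ q2 (del E u) + ((Wset E u).filter (fun x => deg E x = 2)).card := by
  have hsub : Finset.univ.filter (fun x => deg E x = 2) ⊆
      Finset.univ.filter (fun x => deg (del E u) x = 2) ∪
      (Wset E u).filter (fun x => deg E x = 2) := by
    intro x hx
    rw [Finset.mem_filter] at hx
    by_cases hw : x ∈ Wset E u
    · exact Finset.mem_union_right _ (Finset.mem_filter.mpr ⟨hw, hx.2⟩)
    · apply Finset.mem_union_left
      rw [Finset.mem_filter]
      refine ⟨Finset.mem_univ x, ?_⟩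
      have := deg_del_add_co E x u
      have := co_zero_of_not_mem_Wset hw
      omega
  calc q2 E ≤ _ := Finset.card_le_card hsub
  _ ≤ _ := Finset.card_union_le _ _

omit [Fintype V] in
lemma Wset_card_deg_one {E : Finset (Finset V)} {u : V} {f : Finset V}
    (hu : deg E u = 1) (hf : f ∈ E) (huf : u ∈ f) : Wset E u = f := by
  rw [Wset, unique_edge hu hf huf, Finset.singleton_biUnion, id]

lemma Wfilter_deg_one {E : Finset (Finset V)} {u : V} {f : Finset V}
    (hu : deg E u = 1) (hf : f ∈ E) (huf : u ∈ f) (hcard : f.card = 3) :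
    ((Wset E u).filter (fun x => deg E x = 2)).card ≤ 2 := by
  rw [Wset_card_deg_one hu hf huf]
  have hsub : f.filter (fun x => deg E x = 2) ⊆ f.erase u := by
    intro x hx
    rw [Finset.mem_filter] at hx
    refine Finset.mem_erase.mpr ⟨?_, hx.1⟩
    intro h
    subst h
    omega
  calc _ ≤ (f.erase u).card := Finset.card_le_card hsub
  _ = 2 := by rw [Finset.card_erase_of_mem huf, hcard]

omit [Fintype V] in
lemma Wset_card_deg_two {E : Finset (Finset V)} {u : V}
    (h3e : ∀ e ∈ E, e.card = 3) (hu : deg E u = 2) : (Wset E u).card ≤ 5 := by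
  obtain ⟨f1, f2, hne, hpair⟩ := Finset.card_eq_two.mp hu
  have hf1 : f1 ∈ E.filter (fun e => u ∈ e) := by rw [hpair]; simp
  have hf2 : f2 ∈ E.filter (fun e => u ∈ e) := by rw [hpair]; simp
  have hW : Wset E u = f1 ∪ f2 := by
    rw [Wset, hpair]
    ext x
    simp [Finset.mem_biUnion]
  have hu1 : u ∈ f1 := (Finset.mem_filter.mp hf1).2
  have hu2 : u ∈ f2 := (Finset.mem_filter.mp hf2).2
  have hinter : 1 ≤ (f1 ∩ f2).card :=
    Finset.card_pos.mpr ⟨u, Finset.mem_inter.mpr ⟨hu1, hu2⟩⟩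
  have hcards := Finset.card_union_add_card_inter f1 f2
  rw [hW]
  have h1 := h3e f1 (Finset.mem_filter.mp hf1).1
  have h2 := h3e f2 (Finset.mem_filter.mp hf2).1
  omega

lemma two_q2_eq {E : Finset (Finset V)} :
    2 * q2 E = ∑ e ∈ E, (e.filter (fun x => deg E x = 2)).card := by
  have h1 : ∑ v ∈ Finset.univ.filter (fun x => deg E x = 2), deg E v = 2 * q2 E := by
    rw [Finset.sum_congr rfl (fun v hv => (Finset.mem_filter.mp hv).2),
      Finset.sum_const, smul_eq_mul, q2, mul_comm]
  rw [← h1, deg_sum_eq]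
  apply Finset.sum_congr rfl
  intro e _
  congr 1
  apply Finset.filter_congr
  intro x _
  simp

-- ------- assembly -------

lemma gameVal_false_le' {E : Finset (Finset V)} (h : (playable E).Nonempty) {C K : ℕ}
    (H : ∀ u ∈ playable E, gameVal true (del E u) + C ≤ K) :
    gameVal false E + C ≤ 1 + K := by
  rw [gameVal, dif_pos h, if_neg (by simp)]
  obtain ⟨u, hu, hequ⟩ := Finset.exists_mem_eq_sup' (Finset.attach_nonempty_iff.mpr h)
    (fun v : {x // x ∈ playable E} => gameVal (!false) (E.filter (fun e => v.1 ∉ e)))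
  rw [hequ]
  have := H u.1 u.2
  simp only [del] at this
  simp only [Bool.not_false] at *
  omega

lemma gameVal_zero {E : Finset (Finset V)} (h : E = ∅) (b : Bool) : gameVal b E = 0 := by
  subst h
  rw [gameVal, dif_neg]
  simp [playable]

lemma q2_empty : q2 (∅ : Finset (Finset V)) = 0 := by
  simp [q2, deg]

omit [Fintype V] in
lemma card_del_le (E : Finset (Finset V)) (v : V) : (del E v).card ≤ E.card := by
  have := card_del_add_deg E v; omega

lemma Bbound {E' : Finset (Finset V)} (h3' : ∀ e ∈ E', e.card = 3)
    (hA : ∀ u ∈ playable E', 48 * gameVal true (del E' u) ≤ wt (del E' u))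
    (hne : E'.Nonempty) {c : ℕ}
    (hc : ∀ u ∈ playable E', wt (del E' u) + c ≤ wt E') :
    48 * gameVal false E' + c ≤ 48 + wt E' :=
  gameVal_false_le (playable_nonempty h3' hne)
    (fun u hu => by have := hA u hu; have := hc u hu; omega)

theorem Main : ∀ (N : ℕ) (E : Finset (Finset V)), E.card ≤ N → (∀ e ∈ E, e.card = 3) →
    48 * gameVal true E ≤ wt E ∧
    ((∀ z : V, deg E z ≤ 2) →
      gameVal true E + c6 (q2 E) ≤ E.card ∧ gameVal false E + c6 (q2 E - 2) ≤ E.card) := by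
  intro N
  induction N with
  | zero =>
    intro E hcard _
    have hE : E = ∅ := Finset.card_eq_zero.mp (Nat.le_zero.mp hcard)
    subst hE
    refine ⟨by rw [gameVal_zero rfl]; omega, fun _ => ?_⟩
    rw [gameVal_zero rfl, gameVal_zero rfl, q2_empty]
    simp [c6]
  | succ N ih =>
    intro E hcard h3e
    by_cases hE0 : E = ∅
    · subst hE0
      refine ⟨by rw [gameVal_zero rfl]; omega, fun _ => ?_⟩
      rw [gameVal_zero rfl, gameVal_zero rfl, q2_empty]
      simp [c6]
    have hEne : E.Nonempty := Finset.nonempty_iff_ne_empty.mpr hE0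
    have hm1 : 1 ≤ E.card := Finset.card_pos.mpr hEne
    have hchild : ∀ u, 1 ≤ deg E u → (del E u).card ≤ N := by
      intro u hu
      have := card_del_add_deg E u
      omega
    by_cases hL : ∀ z : V, deg E z ≤ 2
    · -- L-region
      have hL2 : gameVal false E + c6 (q2 E - 2) ≤ E.card := by
        have hplne := playable_nonempty h3e hEne
        have H : ∀ u ∈ playable E, gameVal true (del E u) + c6 (q2 E - 2) ≤ E.card - 1 := by
          intro u hu
          have hd1 : 1 ≤ deg E u := deg_pos_of_playable hu
          have hcd := card_del_add_deg E u
          have hq := qdrop (E := E) u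
          have hIL := (ih _ (hchild u hd1) (h3_del h3e u)).2
            (fun y => le_trans (deg_del_le E y u) (hL y))
          have hL1c : gameVal true (del E u) + (q2 (del E u) + 5) / 6 ≤ (del E u).card :=
            hIL.1
          show gameVal true (del E u) + (q2 E - 2 + 5) / 6 ≤ E.card - 1
          rcases (show deg E u = 1 ∨ deg E u = 2 by have := hL u; omega) with h1 | h2
          · obtain ⟨f, hfeq⟩ := Finset.card_eq_one.mp h1
            have hfi : f ∈ E.filter (fun e => u ∈ e) := by
              rw [hfeq]; exact Finset.mem_singleton_self f
            have hfE : f ∈ E := (Finset.mem_filter.mp hfi).1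
            have huf : u ∈ f := (Finset.mem_filter.mp hfi).2
            have hW := Wfilter_deg_one h1 hfE huf (h3e f hfE)
            omega
          · have hW : ((Wset E u).filter (fun x => deg E x = 2)).card ≤ 5 :=
              le_trans (Finset.card_filter_le _ _) (Wset_card_deg_two h3e h2)
            omega
        have hres := gameVal_false_le' hplne H
        omega
      have hL1 : gameVal true E + c6 (q2 E) ≤ E.card := by
        show gameVal true E + (q2 E + 5) / 6 ≤ E.card
        by_cases hq2e : ∃ v, deg E v = 2
        · by_cases ha : ∃ v, deg E v = 2 ∧
              ((Wset E v).filter (fun x => deg E x = 2)).card ≤ 4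
          · obtain ⟨v, hv2, hQ⟩ := ha
            have hvp : v ∈ playable E := playable_of_deg_pos (by omega)
            have hstep := gameVal_true_le hvp
            have hIL := (ih _ (hchild v (by omega)) (h3_del h3e v)).2
              (fun y => le_trans (deg_del_le E y v) (hL y))
            have hL2c : gameVal false (del E v) + (q2 (del E v) - 2 + 5) / 6
                ≤ (del E v).card := hIL.2
            have hq := qdrop (E := E) v
            have hcd := card_del_add_deg E v
            omega
          · push_neg at ha
            have hall : ∀ f ∈ E, ∀ x ∈ f, deg E x = 2 → ∀ y ∈ f, deg E y = 2 := by
              intro f hf x hx hdx y hy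
              by_contra hdy
              have hyW : y ∈ Wset E x :=
                Finset.mem_biUnion.mpr ⟨f, Finset.mem_filter.mpr ⟨hf, hx⟩, hy⟩
              have hsub : (Wset E x).filter (fun z => deg E z = 2) ⊆ (Wset E x).erase y := by
                intro w hw
                rw [Finset.mem_filter] at hw
                refine Finset.mem_erase.mpr ⟨?_, hw.1⟩
                intro hwy
                subst hwy
                exact hdy hw.2
              have hQle : ((Wset E x).filter (fun z => deg E z = 2)).card ≤ 4 := by
                have h5 := Wset_card_deg_two h3e hdx
                calc _ ≤ ((Wset E x).erase y).card := Finset.card_le_card hsub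
                _ = (Wset E x).card - 1 := Finset.card_erase_of_mem hyW
                _ ≤ 4 := by omega
              have := ha x hdx
              omega
            have hdvd : (3:ℕ) ∣ 2 * q2 E := by
              rw [two_q2_eq]
              apply Finset.dvd_sum
              intro e he
              by_cases hex : ∃ x ∈ e, deg E x = 2
              · obtain ⟨x, hx, hdx⟩ := hex
                have heq : e.filter (fun z => deg E z = 2) = e :=
                  Finset.filter_true_of_mem (fun y hy => hall e he x hx hdx y hy)
                rw [heq, h3e e he]
              · push_neg at hex
                have heq : e.filter (fun z => deg E z = 2) = ∅ :=
                  Finset.filter_false_of_mem hex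
                rw [heq]
                simp
            obtain ⟨v, hv2⟩ := hq2e
            have hvp : v ∈ playable E := playable_of_deg_pos (by omega)
            have hstep := gameVal_true_le hvp
            have hIL := (ih _ (hchild v (by omega)) (h3_del h3e v)).2
              (fun y => le_trans (deg_del_le E y v) (hL y))
            have hL2c : gameVal false (del E v) + (q2 (del E v) - 2 + 5) / 6
                ≤ (del E v).card := hIL.2
            have hq := qdrop (E := E) v
            have hW : ((Wset E v).filter (fun x => deg E x = 2)).card ≤ 5 :=
              le_trans (Finset.card_filter_le _ _) (Wset_card_deg_two h3e hv2)
            have hcd := card_del_add_deg E v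
            obtain ⟨k, hk⟩ := hdvd
            omega
        · have hq0 : q2 E = 0 := by
            rw [q2, Finset.card_eq_zero, Finset.eq_empty_iff_forall_notMem]
            intro x hx
            rw [Finset.mem_filter] at hx
            exact hq2e ⟨x, hx.2⟩
          obtain ⟨v, hvp⟩ := playable_nonempty h3e hEne
          have hd1 := deg_pos_of_playable hvp
          have hstep := gameVal_true_le hvp
          have hIL := (ih _ (hchild v hd1) (h3_del h3e v)).2
            (fun y => le_trans (deg_del_le E y v) (hL y))
          have hL2c : gameVal false (del E v) + (q2 (del E v) - 2 + 5) / 6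
              ≤ (del E v).card := hIL.2
          have hcd := card_del_add_deg E v
          omega
      have hwL : 48 * E.card ≤ wt E + 8 * q2 E := by
        have hdegsum : ∑ v : V, deg E v = 3 * E.card := by
          rw [deg_sum_eq E Finset.univ]
          have hterm : ∀ e ∈ E, (e.filter (· ∈ (Finset.univ : Finset V))).card = 3 := by
            intro e he
            rw [Finset.filter_true_of_mem (fun x _ => Finset.mem_univ x), h3e e he]
          rw [Finset.sum_congr rfl hterm, Finset.sum_const, smul_eq_mul, mul_comm]
        have hpt : ∀ v : V, 11 * deg E v ≤ om (deg E v) + (if deg E v = 2 then 8 else 0) := by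
          intro v
          have := hL v
          unfold om
          split_ifs <;> omega
        have hsum := Finset.sum_le_sum (fun v (_ : v ∈ Finset.univ) => hpt v)
        rw [Finset.sum_add_distrib] at hsum
        have h8 : ∑ v : V, (if deg E v = 2 then 8 else 0) = 8 * q2 E := by
          rw [← Finset.sum_filter, Finset.sum_const, smul_eq_mul, q2, mul_comm]
        have hmul : ∑ v : V, 11 * deg E v = 11 * (3 * E.card) := by
          rw [← Finset.mul_sum, hdegsum]
        rw [h8, hmul] at hsum
        unfold wt
        omega
      have hmain : 48 * gameVal true E ≤ wt E := by
        have h1 : gameVal true E + (q2 E + 5) / 6 ≤ E.card := hL1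
        omega
      exact ⟨hmain, fun _ => ⟨hL1, hL2⟩⟩
    · -- H-region
      push_neg at hL
      obtain ⟨z0, hz0⟩ := hL
      refine ⟨?_, fun h => absurd (h z0) (by omega)⟩
      by_cases h4 : ∃ y, 4 ≤ deg E y
      · obtain ⟨v, hv4⟩ := h4
        have hvp : v ∈ playable E := playable_of_deg_pos (by omega)
        have hstep := gameVal_true_le hvp
        have hdrop : wt (del E v) + 75 ≤ wt E := by
          have := D1 E v
          have := bnd75 hv4
          omega
        by_cases hev : del E v = ∅
        · rw [gameVal_zero hev] at hstep
          have := wt_pos h3e hEne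
          omega
        · have hne' : (del E v).Nonempty := Finset.nonempty_iff_ne_empty.mpr hev
          have h3' := h3_del h3e v
          have hA : ∀ u ∈ playable (del E v),
              48 * gameVal true (del (del E v) u) ≤ wt (del (del E v) u) := fun u hu =>
            (ih _ (le_trans (card_del_le _ u) (hchild v (by omega))) (h3_del h3' u)).1
          have hc : ∀ u ∈ playable (del E v), wt (del (del E v) u) + 26 ≤ wt (del E v) := by
            intro u hu
            have := D1 (del E v) u
            have := bnd26 (deg_pos_of_playable hu)
            omega
          have hB := Bbound h3' hA hne' hc
          omega
      · have hmax3 : ∀ y, deg E y ≤ 3 := by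
          intro y
          by_contra hy
          exact h4 ⟨y, by omega⟩
        by_cases hgood : ∃ x, 1 ≤ deg E x ∧ wt (del E x) + 68 ≤ wt E
        · obtain ⟨x, hx1, hx68⟩ := hgood
          have hxp : x ∈ playable E := playable_of_deg_pos hx1
          have hstep := gameVal_true_le hxp
          by_cases hev : del E x = ∅
          · rw [gameVal_zero hev] at hstep
            have := wt_pos h3e hEne
            omega
          · have hne' : (del E x).Nonempty := Finset.nonempty_iff_ne_empty.mpr hev
            have h3' := h3_del h3e x
            have hmax3' : ∀ y, deg (del E x) y ≤ 3 :=
              fun y => le_trans (deg_del_le E y x) (hmax3 y)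
            have hA : ∀ u ∈ playable (del E x),
                48 * gameVal true (del (del E x) u) ≤ wt (del (del E x) u) := fun u hu =>
              (ih _ (le_trans (card_del_le _ u) (hchild x hx1)) (h3_del h3' u)).1
            have hc : ∀ u ∈ playable (del E x), wt (del (del E x) u) + 28 ≤ wt (del E x) := by
              intro u hu
              by_cases h2 : 2 ≤ deg (del E x) u
              · have := D1 (del E x) u
                have := bnd44 h2
                omega
              · have hdeq : deg (del E x) u = 1 := by
                  have := deg_pos_of_playable hu
                  omega
                obtain ⟨f, hfeq⟩ := Finset.card_eq_one.mp hdeq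
                have hfi : f ∈ (del E x).filter (fun e => u ∈ e) := by
                  rw [hfeq]; exact Finset.mem_singleton_self f
                have hfE : f ∈ del E x := (Finset.mem_filter.mp hfi).1
                have huf : u ∈ f := (Finset.mem_filter.mp hfi).2
                exact D2base hmax3' hdeq hfE huf (h3' f hfE)
            have hB := Bbound h3' hA hne' hc
            omega
        · -- no good vertex; play z0 with degree 3
          have hz3 : deg E z0 = 3 := le_antisymm (hmax3 z0) (by omega)
          have hvp : z0 ∈ playable E := playable_of_deg_pos (by omega)
          have hstep := gameVal_true_le hvp
          have hdrop : wt (del E z0) + 66 ≤ wt E := D3 hmax3 h3e hz3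
          by_cases hev : del E z0 = ∅
          · rw [gameVal_zero hev] at hstep
            have := wt_pos h3e hEne
            omega
          · have hne' : (del E z0).Nonempty := Finset.nonempty_iff_ne_empty.mpr hev
            have h3' := h3_del h3e z0
            have hmax3' : ∀ y, deg (del E z0) y ≤ 3 :=
              fun y => le_trans (deg_del_le E y z0) (hmax3 y)
            have hA : ∀ u ∈ playable (del E z0),
                48 * gameVal true (del (del E z0) u) ≤ wt (del (del E z0) u) := fun u hu =>
              (ih _ (le_trans (card_del_le _ u) (hchild z0 (by omega))) (h3_del h3' u)).1
            have hc : ∀ u ∈ playable (del E z0),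
                wt (del (del E z0) u) + 30 ≤ wt (del E z0) := by
              intro u hu
              by_cases h2 : 2 ≤ deg (del E z0) u
              · have := D1 (del E z0) u
                have := bnd44 h2
                omega
              · have hdeq : deg (del E z0) u = 1 := by
                  have := deg_pos_of_playable hu
                  omega
                obtain ⟨f, hfeq⟩ := Finset.card_eq_one.mp hdeq
                have hfi : f ∈ (del E z0).filter (fun e => u ∈ e) := by
                  rw [hfeq]; exact Finset.mem_singleton_self f
                have hfE : f ∈ del E z0 := (Finset.mem_filter.mp hfi).1
                have huf : u ∈ f := (Finset.mem_filter.mp hfi).2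
                have hf3 : f.card = 3 := h3' f hfE
                by_cases hlow : ∃ x ∈ f, x ≠ u ∧ deg (del E z0) x ≤ 2
                · obtain ⟨x, hxf, hxu, hxlow⟩ := hlow
                  exact D2low hmax3' hdeq hfE huf hf3 hxf hxu hxlow
                · exfalso
                  push_neg at hlow
                  obtain ⟨x, hxf, hxu⟩ :=
                    Finset.exists_mem_ne (by rw [hf3]; omega) u
                  have hx3' : deg (del E z0) x = 3 :=
                    le_antisymm (hmax3' x) (hlow x hxf hxu)
                  have hxE3 : deg E x = 3 := by
                    have h1 := deg_del_le E x z0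
                    have h2 := hmax3 x
                    omega
                  have hfEE : f ∈ E := (Finset.mem_filter.mp hfE).1
                  have hcoux : 1 ≤ co E u x := co_pos_of_mem hfEE huf hxf
                  have hunv : u ≠ z0 := by
                    intro h
                    subst h
                    rw [deg_del_self] at hdeq
                    omega
                  have hcouv := deg_del_add_co E u z0
                  by_cases hud : deg E u ≤ 2
                  · exact hgood ⟨x, by omega,
                      D68 hmax3 h3e hxE3 (Ne.symm hxu) hcoux (Or.inl hud)⟩
                  · have hu3 : deg E u = 3 := le_antisymm (hmax3 u) (by omega)
                    have hco2 : 2 ≤ co E u z0 := by omega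
                    exact hgood ⟨z0, by omega,
                      D68 hmax3 h3e hz3 hunv (by omega) (Or.inr hco2)⟩
            have hB := Bbound h3' hA hne' hc
            omega

lemma sum_indicator (p : V → Prop) [DecidablePred p] (c : ℕ) :
    ∑ v : V, (if p v then c else 0) = c * (Finset.univ.filter p).card := by
  rw [← Finset.sum_filter, Finset.sum_const, smul_eq_mul, mul_comm]

lemma wt_eq (E : Finset (Finset V)) :
    wt E = 15 * (Finset.univ.filter (fun v : V => 3 ≤ deg E v)).card
      + 14 * (Finset.univ.filter (fun v : V => deg E v = 2)).card
      + 11 * (Finset.univ.filter (fun v : V => deg E v = 1)).card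
      + 15 * E.card := by
  have hpt : ∀ v : V, om (deg E v) = (if 3 ≤ deg E v then 15 else 0)
      + (if deg E v = 2 then 14 else 0) + (if deg E v = 1 then 11 else 0) := by
    intro v
    unfold om
    split_ifs <;> omega
  unfold wt
  rw [Finset.sum_congr rfl (fun v _ => hpt v)]
  rw [Finset.sum_add_distrib, Finset.sum_add_distrib]
  rw [sum_indicator, sum_indicator, sum_indicator]
  ring

end TG

/-- If `H` is a `3`-uniform hypergraph, then
`48 τ_g(H) ≤ 15 n_{≥3}(H) + 14 n_2(H) + 11 n_1(H) + 15 m(H)`,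
where `n_{≥3}(H)`, `n_2(H)`, `n_1(H)` are the numbers of vertices of degree at
least `3`, exactly `2`, and exactly `1`, respectively. -/
theorem gameTransversalNum_weighted_bound_of_three_uniform
    {V : Type} [Fintype V] [DecidableEq V] (E : Finset (Finset V))
    (h3 : ∀ e ∈ E, e.card = 3) :
    48 * gameTransversalNum E ≤
        15 * (Finset.univ.filter (fun v : V => 3 ≤ (E.filter (fun e => v ∈ e)).card)).card
      + 14 * (Finset.univ.filter (fun v : V => (E.filter (fun e => v ∈ e)).card = 2)).card
      + 11 * (Finset.univ.filter (fun v : V => (E.filter (fun e => v ∈ e)).card = 1)).card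
      + 15 * E.card := by
  have h := (TG.Main E.card E le_rfl h3).1
  rw [TG.wt_eq] at h
  exact h
end

section
/- If H is a 3-uniform hypergraph with maximum degree Δ(H) ≤ 2, then τ_g(H) ≤ n(H)/2. -/
variable {V : Type} [Fintype V] [DecidableEq V]

set_option linter.unusedSectionVars false
set_option linter.unusedVariables false
set_option maxHeartbeats 1000000

def hdeg (E : Finset (Finset V)) (v : V) : ℕ := (E.filter (fun e => v ∈ e)).card
def resid (E : Finset (Finset V)) (v : V) : Finset (Finset V) := E.filter (fun e => v ∉ e)
def D1c (E : Finset (Finset V)) : ℕ := (Finset.univ.filter (fun v => hdeg E v = 1)).card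

lemma mem_playable {E : Finset (Finset V)} {v : V} : v ∈ playable E ↔ ∃ e ∈ E, v ∈ e := by
  simp [playable]

lemma mem_playable_iff_hdeg {E : Finset (Finset V)} {v : V} :
    v ∈ playable E ↔ 0 < hdeg E v := by
  rw [mem_playable, hdeg, Finset.card_pos, Finset.filter_nonempty_iff]

lemma hdeg_split (E : Finset (Finset V)) (v u : V) :
    hdeg E u = hdeg (resid E v) u + ((E.filter (fun e => v ∈ e)).filter (fun e => u ∈ e)).card := by
  unfold hdeg resid
  rw [Finset.filter_filter, Finset.filter_filter]
  rw [← Finset.card_filter_add_card_filter_not (s := E.filter (fun e => u ∈ e))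
      (p := fun e => v ∈ e)]
  · rw [Finset.filter_filter, Finset.filter_filter]
    have h1 : E.filter (fun e => v ∉ e ∧ u ∈ e) = E.filter (fun e => u ∈ e ∧ ¬ v ∈ e) := by
      apply Finset.filter_congr; intro e _; tauto
    have h2 : E.filter (fun e => v ∈ e ∧ u ∈ e) = E.filter (fun e => u ∈ e ∧ v ∈ e) := by
      apply Finset.filter_congr; intro e _; tauto
    rw [h1, h2]; omega

lemma hdeg_resid_le (E : Finset (Finset V)) (v u : V) :
    hdeg (resid E v) u ≤ hdeg E u := by
  rw [hdeg_split E v u]; omega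

lemma hdeg_resid_self (E : Finset (Finset V)) (v : V) : hdeg (resid E v) v = 0 := by
  unfold hdeg resid
  rw [Finset.card_eq_zero, Finset.filter_eq_empty_iff]
  intro e he
  rw [Finset.mem_filter] at he
  exact he.2

lemma playable_resid_subset (E : Finset (Finset V)) (v : V) :
    playable (resid E v) ⊆ playable E := by
  intro u hu
  rw [mem_playable_iff_hdeg] at hu ⊢
  have := hdeg_resid_le E v u
  omega

lemma star {E : Finset (Finset V)} (h3 : ∀ e ∈ E, e.card = 3) (hΔ : ∀ u : V, hdeg E u ≤ 2)
    {v : V} (hv : v ∈ playable E) :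
    D1c E + 3 + 2 * hdeg E v +
      ((playable E).filter (fun u => u ≠ v ∧ hdeg E u = 1 ∧ hdeg (resid E v) u = 0)).card
    ≤ 3 * ((playable E).card - (playable (resid E v)).card) + D1c (resid E v)
        + (if hdeg E v = 1 then 1 else 0) := by
  classical
  set A := (playable E).filter (fun u => u ≠ v ∧ hdeg E u = 1 ∧ hdeg (resid E v) u = 0) with hA
  set B := (playable E).filter (fun u => hdeg E u = 2 ∧ hdeg (resid E v) u = 1) with hB
  set C := (playable E).filter (fun u => u ≠ v ∧ hdeg E u = 2 ∧ hdeg (resid E v) u = 0) with hC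
  set Old := (playable E).filter (fun u => hdeg E u = 1 ∧ hdeg (resid E v) u = 1) with hOld
  have hsub : playable (resid E v) ⊆ playable E := playable_resid_subset E v
  have hs'le : (playable (resid E v)).card ≤ (playable E).card := Finset.card_le_card hsub
  have hvdead : v ∉ playable (resid E v) := by
    rw [mem_playable_iff_hdeg, hdeg_resid_self]; omega
  have hBnev : ∀ u ∈ B, u ≠ v := by
    intro u hu
    rw [hB, Finset.mem_filter] at hu
    intro h; subst h
    rw [hdeg_resid_self] at hu
    omega
  -- fact1
  have fact1 : 1 + A.card + C.card + (playable (resid E v)).card ≤ (playable E).card := by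
    have hsubD : insert v (A ∪ C) ⊆ playable E \ playable (resid E v) := by
      intro u hu
      rw [Finset.mem_insert] at hu
      rcases hu with rfl | hu
      · exact Finset.mem_sdiff.mpr ⟨hv, hvdead⟩
      · rw [Finset.mem_union] at hu
        rcases hu with hu | hu
        · rw [hA, Finset.mem_filter] at hu
          refine Finset.mem_sdiff.mpr ⟨hu.1, ?_⟩
          rw [mem_playable_iff_hdeg]; omega
        · rw [hC, Finset.mem_filter] at hu
          refine Finset.mem_sdiff.mpr ⟨hu.1, ?_⟩
          rw [mem_playable_iff_hdeg]; omega
    have hdisjAC : Disjoint A C := by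
      rw [Finset.disjoint_left]
      intro u hu hu'
      rw [hA, Finset.mem_filter] at hu
      rw [hC, Finset.mem_filter] at hu'
      omega
    have hvnot : v ∉ A ∪ C := by
      rw [Finset.mem_union, hA, hC]
      rintro (h | h) <;> · rw [Finset.mem_filter] at h; exact h.2.1 rfl
    have hcard1 : (insert v (A ∪ C)).card = 1 + A.card + C.card := by
      rw [Finset.card_insert_of_notMem hvnot, Finset.card_union_of_disjoint hdisjAC]
      omega
    have := Finset.card_le_card hsubD
    rw [hcard1, Finset.card_sdiff_of_subset hsub] at this
    omega
  -- fact2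
  have fact2 : B.card + Old.card ≤ D1c (resid E v) := by
    have hsubD1 : B ∪ Old ⊆ Finset.univ.filter (fun u => hdeg (resid E v) u = 1) := by
      intro u hu
      rw [Finset.mem_union] at hu
      rw [Finset.mem_filter]
      rcases hu with hu | hu
      · rw [hB, Finset.mem_filter] at hu; exact ⟨Finset.mem_univ u, hu.2.2⟩
      · rw [hOld, Finset.mem_filter] at hu; exact ⟨Finset.mem_univ u, hu.2.2⟩
    have hdisj : Disjoint B Old := by
      rw [Finset.disjoint_left]
      intro u hu hu'
      rw [hB, Finset.mem_filter] at hu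
      rw [hOld, Finset.mem_filter] at hu'
      omega
    have := Finset.card_le_card hsubD1
    rw [Finset.card_union_of_disjoint hdisj] at this
    exact this
  -- fact3
  have fact3 : D1c E ≤ Old.card + A.card + (if hdeg E v = 1 then 1 else 0) := by
    have hsub3 : ∀ u, hdeg E u = 1 → u ≠ v → u ∈ Old ∪ A := by
      intro u hu hne
      have hup : u ∈ playable E := mem_playable_iff_hdeg.mpr (by omega)
      have hle := hdeg_resid_le E v u
      rw [Finset.mem_union]
      rcases Nat.lt_or_ge (hdeg (resid E v) u) 1 with h | h
      · right; rw [hA, Finset.mem_filter]; exact ⟨hup, hne, hu, by omega⟩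
      · left; rw [hOld, Finset.mem_filter]; exact ⟨hup, hu, by omega⟩
    by_cases hdv : hdeg E v = 1
    · rw [if_pos hdv]
      have : Finset.univ.filter (fun u => hdeg E u = 1) ⊆ insert v (Old ∪ A) := by
        intro u hu
        rw [Finset.mem_filter] at hu
        by_cases h : u = v
        · exact Finset.mem_insert.mpr (Or.inl h)
        · exact Finset.mem_insert.mpr (Or.inr (hsub3 u hu.2 h))
      calc D1c E ≤ (insert v (Old ∪ A)).card := Finset.card_le_card this
        _ ≤ (Old ∪ A).card + 1 := Finset.card_insert_le _ _
        _ ≤ Old.card + A.card + 1 := by have := Finset.card_union_le Old A; omega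
    · rw [if_neg hdv]
      have : Finset.univ.filter (fun u => hdeg E u = 1) ⊆ Old ∪ A := by
        intro u hu
        rw [Finset.mem_filter] at hu
        have hne : u ≠ v := by intro h; subst h; exact hdv hu.2
        exact hsub3 u hu.2 hne
      calc D1c E ≤ (Old ∪ A).card := Finset.card_le_card this
        _ ≤ Old.card + A.card + 0 := by have := Finset.card_union_le Old A; omega
  -- fact4
  have fact4 : 2 * hdeg E v ≤ A.card + B.card + 2 * C.card := by
    have hTne : ∀ u ∈ (A ∪ B) ∪ C, u ≠ v := by
      intro u hu
      rw [Finset.mem_union, Finset.mem_union] at hu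
      rcases hu with (hu | hu) | hu
      · rw [hA, Finset.mem_filter] at hu; exact hu.2.1
      · exact hBnev u hu
      · rw [hC, Finset.mem_filter] at hu; exact hu.2.1
    have herase2 : ∀ e ∈ E.filter (fun e => v ∈ e), (e.erase v).card = 2 := by
      intro e he
      rw [Finset.mem_filter] at he
      rw [Finset.card_erase_of_mem he.2, h3 e he.1]
    have heraseT : ∀ e ∈ E.filter (fun e => v ∈ e), e.erase v ⊆ (A ∪ B) ∪ C := by
      intro e he u hu
      have hene := he
      rw [Finset.mem_filter] at hene
      have hue : u ∈ e := Finset.mem_of_mem_erase hu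
      have hunv : u ≠ v := Finset.ne_of_mem_erase hu
      have hup : u ∈ playable E := mem_playable.mpr ⟨e, hene.1, hue⟩
      have hd1 : 0 < hdeg E u := mem_playable_iff_hdeg.mp hup
      have hd2 : hdeg E u ≤ 2 := hΔ u
      have hsplit := hdeg_split E v u
      have hRpos : 0 < ((E.filter (fun e => v ∈ e)).filter (fun e => u ∈ e)).card := by
        rw [Finset.card_pos]
        exact ⟨e, Finset.mem_filter.mpr ⟨Finset.mem_filter.mpr ⟨hene.1, hene.2⟩, hue⟩⟩
      rw [Finset.mem_union, Finset.mem_union]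
      rcases Nat.lt_or_ge (hdeg E u) 2 with h2 | h2
      · left; left; rw [hA, Finset.mem_filter]
        exact ⟨hup, hunv, by omega, by omega⟩
      · have hdeq : hdeg E u = 2 := by omega
        rcases Nat.lt_or_ge (hdeg (resid E v) u) 1 with h1 | h1
        · right; rw [hC, Finset.mem_filter]; exact ⟨hup, hunv, hdeq, by omega⟩
        · left; right; rw [hB, Finset.mem_filter]
          refine ⟨hup, hdeq, by omega⟩
    have hsum1 : ∑ e ∈ E.filter (fun e => v ∈ e), (e.erase v).card
        = ∑ u ∈ (A ∪ B) ∪ C, ((E.filter (fun e => v ∈ e)).filter (fun e => u ∈ e)).card := by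
      have step1 : ∀ e ∈ E.filter (fun e => v ∈ e),
          (e.erase v).card = ∑ u ∈ (A ∪ B) ∪ C, (if u ∈ e.erase v then 1 else 0) := by
        intro e he
        rw [← Finset.card_filter]
        congr 1
        rw [Finset.filter_mem_eq_inter, Finset.inter_eq_right.mpr (heraseT e he)]
      rw [Finset.sum_congr rfl step1, Finset.sum_comm]
      apply Finset.sum_congr rfl
      intro u hu
      rw [← Finset.card_filter]
      apply congrArg
      apply Finset.filter_congr
      intro e he
      simp only [Finset.mem_erase]
      constructor
      · intro h; exact h.2
      · intro h; exact ⟨hTne u hu, h⟩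
    have hsum2 : ∑ u ∈ (A ∪ B) ∪ C, ((E.filter (fun e => v ∈ e)).filter (fun e => u ∈ e)).card
        ≤ A.card + B.card + 2 * C.card := by
      have hdisjAB : Disjoint A B := by
        rw [Finset.disjoint_left]; intro u hu hu'
        rw [hA, Finset.mem_filter] at hu; rw [hB, Finset.mem_filter] at hu'; omega
      have hdisjABC : Disjoint (A ∪ B) C := by
        rw [Finset.disjoint_left]; intro u hu hu'
        rw [Finset.mem_union] at hu
        rw [hC, Finset.mem_filter] at hu'
        rcases hu with hu | hu
        · rw [hA, Finset.mem_filter] at hu; omega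
        · rw [hB, Finset.mem_filter] at hu; omega
      rw [Finset.sum_union hdisjABC, Finset.sum_union hdisjAB]
      have bndA : ∑ u ∈ A, ((E.filter (fun e => v ∈ e)).filter (fun e => u ∈ e)).card ≤ A.card := by
        apply le_trans (Finset.sum_le_card_nsmul A _ 1 ?_) (by simp)
        intro u hu
        rw [hA, Finset.mem_filter] at hu
        have := hdeg_split E v u
        omega
      have bndB : ∑ u ∈ B, ((E.filter (fun e => v ∈ e)).filter (fun e => u ∈ e)).card ≤ B.card := by
        apply le_trans (Finset.sum_le_card_nsmul B _ 1 ?_) (by simp)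
        intro u hu
        rw [hB, Finset.mem_filter] at hu
        have := hdeg_split E v u
        omega
      have bndC : ∑ u ∈ C, ((E.filter (fun e => v ∈ e)).filter (fun e => u ∈ e)).card
          ≤ 2 * C.card := by
        apply le_trans (Finset.sum_le_card_nsmul C _ 2 ?_) (by simp [mul_comm])
        intro u hu
        rw [hC, Finset.mem_filter] at hu
        have := hdeg_split E v u
        omega
      omega
    have hdegR : hdeg E v = (E.filter (fun e => v ∈ e)).card := rfl
    have hconst : 2 * (E.filter (fun e => v ∈ e)).card
        = ∑ e ∈ E.filter (fun e => v ∈ e), (e.erase v).card := by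
      rw [Finset.sum_congr rfl herase2, Finset.sum_const, smul_eq_mul, mul_comm]
    omega
  by_cases hdv : hdeg E v = 1
  · rw [if_pos hdv]; rw [if_pos hdv] at fact3; omega
  · rw [if_neg hdv]; rw [if_neg hdv] at fact3; omega

lemma edge_subset_playable {E : Finset (Finset V)} {e : Finset V} (he : e ∈ E) :
    e ⊆ playable E := fun u hu => mem_playable.mpr ⟨e, he, hu⟩

-- boundary lemma: if all edges contain v then s ≤ 3 * deg v
lemma s_le_of_resid_empty {E : Finset (Finset V)} (h3 : ∀ e ∈ E, e.card = 3) {v : V}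
    (h : ¬ (playable (resid E v)).Nonempty) : (playable E).card ≤ 3 * hdeg E v := by
  have hres : resid E v = ∅ := by
    by_contra hne
    obtain ⟨e, he⟩ := Finset.nonempty_iff_ne_empty.mpr hne
    have he3 : e.card = 3 := h3 e (Finset.mem_filter.mp he).1
    have : e.Nonempty := Finset.card_pos.mp (by omega)
    obtain ⟨u, hu⟩ := this
    exact h ⟨u, mem_playable.mpr ⟨e, he, hu⟩⟩
  have hall : E = E.filter (fun e => v ∈ e) := by
    ext e
    rw [Finset.mem_filter]
    constructor
    · intro he
      refine ⟨he, ?_⟩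
      by_contra hvn
      have : e ∈ resid E v := Finset.mem_filter.mpr ⟨he, hvn⟩
      rw [hres] at this
      exact absurd this (Finset.notMem_empty e)
    · exact fun h => h.1
  have hsub : playable E ⊆ E.biUnion id := by
    intro u hu
    rw [mem_playable] at hu
    obtain ⟨e, he, hue⟩ := hu
    exact Finset.mem_biUnion.mpr ⟨e, he, hue⟩
  calc (playable E).card ≤ (E.biUnion id).card := Finset.card_le_card hsub
    _ ≤ ∑ e ∈ E, (id e).card := Finset.card_biUnion_le
    _ = ∑ e ∈ E, 3 := by apply Finset.sum_congr rfl; intro e he; exact h3 e he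
    _ = 3 * E.card := by rw [Finset.sum_const, smul_eq_mul, mul_comm]
    _ = 3 * hdeg E v := by rw [hdeg, ← hall]

lemma D1c_lt_s {E : Finset (Finset V)} {y : V} (hy : y ∈ playable E) (hdy : hdeg E y ≠ 1) :
    D1c E + 1 ≤ (playable E).card := by
  have hsub : Finset.univ.filter (fun v => hdeg E v = 1) ⊆ (playable E).erase y := by
    intro u hu
    rw [Finset.mem_filter] at hu
    refine Finset.mem_erase.mpr ⟨?_, mem_playable_iff_hdeg.mpr (by omega)⟩
    intro h; subst h; exact hdy hu.2
  have := Finset.card_le_card hsub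
  rw [Finset.card_erase_of_mem hy] at this
  have hpos : 0 < (playable E).card := Finset.card_pos.mpr ⟨y, hy⟩
  rw [D1c]
  omega

-- case-3 facts
lemma iso_facts {E : Finset (Finset V)} (h3 : ∀ e ∈ E, e.card = 3) (hΔ : ∀ u : V, hdeg E u ≤ 2)
    (hno : ∀ e ∈ E, ∀ a ∈ e, ∀ b ∈ e, ¬ (hdeg E a = 1 ∧ hdeg E b = 2))
    {x : V} (hx : hdeg E x = 1) :
    (playable (resid E x)).card + 3 = (playable E).card ∧
    D1c (resid E x) + 3 = D1c E ∧
    (∃ k, D1c E = 3 * k ∧ 1 ≤ k) := by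
  classical
  -- the unique edge of x
  obtain ⟨e₀, he₀⟩ : ∃ e₀, E.filter (fun e => x ∈ e) = {e₀} := Finset.card_eq_one.mp hx
  have he₀E : e₀ ∈ E ∧ x ∈ e₀ := by
    have : e₀ ∈ E.filter (fun e => x ∈ e) := by rw [he₀]; exact Finset.mem_singleton_self e₀
    exact ⟨(Finset.mem_filter.mp this).1, (Finset.mem_filter.mp this).2⟩
  -- every vertex of an edge containing a degree-1 vertex has degree 1
  have hall1 : ∀ e ∈ E, ∀ a ∈ e, hdeg E a = 1 → ∀ u ∈ e, hdeg E u = 1 := by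
    intro e he a ha hda u hu
    have h1 : 0 < hdeg E u := mem_playable_iff_hdeg.mp (edge_subset_playable he hu)
    have h2 : hdeg E u ≤ 2 := hΔ u
    have := hno e he a ha u hu
    omega
  have he₀all : ∀ u ∈ e₀, hdeg E u = 1 := hall1 e₀ he₀E.1 x he₀E.2 hx
  -- degree of vertices outside e₀ unchanged, inside e₀ becomes 0
  have hdeg_out : ∀ u, u ∉ e₀ → hdeg (resid E x) u = hdeg E u := by
    intro u hu
    have := hdeg_split E x u
    rw [he₀] at this
    rw [Finset.filter_singleton] at this
    rw [if_neg hu] at this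
    simp at this
    omega
  have hdeg_in : ∀ u, u ∈ e₀ → hdeg (resid E x) u = 0 := by
    intro u hu
    have hd1 : hdeg E u = 1 := he₀all u hu
    have := hdeg_split E x u
    rw [he₀, Finset.filter_singleton, if_pos hu] at this
    simp at this
    omega
  -- playable of resid
  have hply : playable (resid E x) = playable E \ e₀ := by
    ext u
    rw [Finset.mem_sdiff, mem_playable_iff_hdeg, mem_playable_iff_hdeg]
    by_cases hu : u ∈ e₀
    · rw [hdeg_in u hu]
      simp [hu]
    · rw [hdeg_out u hu]
      simp [hu]
  have he₀sub : e₀ ⊆ playable E := edge_subset_playable he₀E.1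
  have hs : (playable (resid E x)).card + 3 = (playable E).card := by
    rw [hply, Finset.card_sdiff_of_subset he₀sub, h3 e₀ he₀E.1]
    have : e₀.card ≤ (playable E).card := Finset.card_le_card he₀sub
    rw [h3 e₀ he₀E.1] at this
    omega
  -- D1 of resid
  have hD1' : Finset.univ.filter (fun u => hdeg (resid E x) u = 1)
      = (Finset.univ.filter (fun u => hdeg E u = 1)) \ e₀ := by
    ext u
    rw [Finset.mem_sdiff, Finset.mem_filter, Finset.mem_filter]
    by_cases hu : u ∈ e₀
    · rw [hdeg_in u hu]; simp [hu]
    · rw [hdeg_out u hu]; simp [hu]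
  have he₀subD : e₀ ⊆ Finset.univ.filter (fun u => hdeg E u = 1) := by
    intro u hu
    exact Finset.mem_filter.mpr ⟨Finset.mem_univ u, he₀all u hu⟩
  have hD1 : D1c (resid E x) + 3 = D1c E := by
    rw [D1c, D1c, hD1', Finset.card_sdiff_of_subset he₀subD, h3 e₀ he₀E.1]
    have := Finset.card_le_card he₀subD
    rw [h3 e₀ he₀E.1] at this
    omega
  -- D1c E = 3 * number of all-deg-1 edges
  have hmod : ∃ k, D1c E = 3 * k ∧ 1 ≤ k := by
    set I := E.filter (fun e => ∀ u ∈ e, hdeg E u = 1) with hI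
    have he₀I : e₀ ∈ I := Finset.mem_filter.mpr ⟨he₀E.1, he₀all⟩
    have hbi : Finset.univ.filter (fun v => hdeg E v = 1) = I.biUnion id := by
      ext u
      rw [Finset.mem_filter, Finset.mem_biUnion]
      constructor
      · intro hu
        have : 0 < hdeg E u := by omega
        have : u ∈ playable E := mem_playable_iff_hdeg.mpr this
        rw [mem_playable] at this
        obtain ⟨e, he, hue⟩ := this
        exact ⟨e, Finset.mem_filter.mpr ⟨he, hall1 e he u hue hu.2⟩, hue⟩
      · rintro ⟨e, heI, hue⟩
        rw [hI, Finset.mem_filter] at heI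
        exact ⟨Finset.mem_univ u, heI.2 u hue⟩
    have hdisj : ∀ e ∈ I, ∀ f ∈ I, e ≠ f → Disjoint (id e) (id f) := by
      intro e heI f hfI hef
      rw [Finset.disjoint_left]
      intro u hue huf
      rw [hI, Finset.mem_filter] at heI hfI
      have hd : hdeg E u = 1 := heI.2 u hue
      have h2 : ({e, f} : Finset (Finset V)) ⊆ E.filter (fun g => u ∈ g) := by
        intro g hg
        rw [Finset.mem_insert, Finset.mem_singleton] at hg
        rcases hg with rfl | rfl
        · exact Finset.mem_filter.mpr ⟨heI.1, hue⟩
        · exact Finset.mem_filter.mpr ⟨hfI.1, huf⟩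
      have := Finset.card_le_card h2
      rw [Finset.card_insert_of_notMem (by simp [hef]), Finset.card_singleton] at this
      rw [hdeg] at hd
      omega
    refine ⟨I.card, ?_, ?_⟩
    · rw [D1c, hbi, Finset.card_biUnion hdisj]
      have : ∀ e ∈ I, (id e).card = 3 := by
        intro e heI
        exact h3 e (Finset.mem_filter.mp heI).1
      rw [Finset.sum_congr rfl this, Finset.sum_const, smul_eq_mul, mul_comm]
    · exact Finset.card_pos.mpr ⟨e₀, he₀I⟩
  exact ⟨hs, hD1, hmod⟩

def tN (d : ℕ) : ℕ := (d + 2) / 3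
def fN (d : ℕ) : ℕ := if d = 0 then 1 else d / 3

lemma gameVal_of_not_playable (b : Bool) {E : Finset (Finset V)}
    (h : ¬ (playable E).Nonempty) : gameVal b E = 0 := by
  rw [gameVal, dif_neg h]

lemma gameVal_true_eq {E : Finset (Finset V)} (h : (playable E).Nonempty) :
    gameVal true E = 1 + (playable E).attach.inf' (Finset.attach_nonempty_iff.mpr h)
      (fun v => gameVal false (resid E v.1)) := by
  rw [gameVal, dif_pos h]
  simp [resid]

lemma gameVal_false_eq {E : Finset (Finset V)} (h : (playable E).Nonempty) :
    gameVal false E = 1 + (playable E).attach.sup' (Finset.attach_nonempty_iff.mpr h)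
      (fun v => gameVal true (resid E v.1)) := by
  rw [gameVal, dif_pos h]
  simp [resid]

lemma playable_nonempty {E : Finset (Finset V)} (h3 : ∀ e ∈ E, e.card = 3)
    (hE : E.Nonempty) : (playable E).Nonempty := by
  obtain ⟨e, he⟩ := hE
  have : e.Nonempty := Finset.card_pos.mp (by rw [h3 e he]; omega)
  obtain ⟨u, hu⟩ := this
  exact ⟨u, mem_playable.mpr ⟨e, he, hu⟩⟩

lemma nonempty_of_playable {E : Finset (Finset V)} (h : (playable E).Nonempty) :
    E.Nonempty := by
  obtain ⟨v, hv⟩ := h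
  rw [mem_playable] at hv
  obtain ⟨e, he, _⟩ := hv
  exact ⟨e, he⟩

lemma three_le_s {E : Finset (Finset V)} (h3 : ∀ e ∈ E, e.card = 3) (hE : E.Nonempty) :
    3 ≤ (playable E).card := by
  obtain ⟨e, he⟩ := hE
  calc 3 = e.card := (h3 e he).symm
    _ ≤ (playable E).card := Finset.card_le_card (edge_subset_playable he)

lemma D1c_le_s (E : Finset (Finset V)) : D1c E ≤ (playable E).card := by
  apply Finset.card_le_card
  intro u hu
  rw [Finset.mem_filter] at hu
  rw [mem_playable_iff_hdeg]
  omega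

lemma resid_card_lt {E : Finset (Finset V)} {v : V} (hv : v ∈ playable E) :
    (resid E v).card < E.card := by
  rw [mem_playable] at hv
  obtain ⟨e, he, hve⟩ := hv
  exact Finset.card_lt_card (Finset.filter_ssubset.mpr ⟨e, he, by simp [hve]⟩)

lemma resid_h3 {E : Finset (Finset V)} (h3 : ∀ e ∈ E, e.card = 3) (v : V) :
    ∀ e ∈ resid E v, e.card = 3 := fun e he => h3 e (Finset.mem_filter.mp he).1

lemma resid_hΔ {E : Finset (Finset V)} (hΔ : ∀ u : V, hdeg E u ≤ 2) (v : V) :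
    ∀ u : V, hdeg (resid E v) u ≤ 2 := fun u => le_trans (hdeg_resid_le E v u) (hΔ u)

lemma s_resid_lt {E : Finset (Finset V)} {v : V} (hv : v ∈ playable E) :
    (playable (resid E v)).card < (playable E).card := by
  apply Finset.card_lt_card
  rw [Finset.ssubset_iff_of_subset (playable_resid_subset E v)]
  refine ⟨v, hv, ?_⟩
  rw [mem_playable_iff_hdeg, hdeg_resid_self]
  omega

lemma D1c_pos_of {E : Finset (Finset V)} {u : V} (h : hdeg E u = 1) : 0 < D1c E := by
  rw [D1c, Finset.card_pos]
  exact ⟨u, Finset.mem_filter.mpr ⟨Finset.mem_univ u, h⟩⟩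

lemma main_claims : ∀ (N : ℕ) (E : Finset (Finset V)), E.card ≤ N →
    (∀ e ∈ E, e.card = 3) → (∀ u : V, hdeg E u ≤ 2) →
    2 * gameVal true E + tN (D1c E) ≤ (playable E).card ∧
    (E.Nonempty → 2 * gameVal false E + fN (D1c E) ≤ (playable E).card) := by
  intro N
  induction N with
  | zero =>
    intro E hc h3 hΔ
    have hE : E = ∅ := Finset.card_eq_zero.mp (by omega)
    subst hE
    have hply : ¬ (playable (∅ : Finset (Finset V))).Nonempty := by
      rintro ⟨v, hv⟩
      rw [mem_playable] at hv
      obtain ⟨e, he, _⟩ := hv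
      exact absurd he (Finset.notMem_empty e)
    constructor
    · rw [gameVal_of_not_playable true hply]
      have hD : D1c (∅ : Finset (Finset V)) = 0 := by
        rw [D1c, Finset.card_eq_zero, Finset.filter_eq_empty_iff]
        intro u _
        rw [hdeg]
        simp
      rw [hD]
      simp [tN]
    · rintro ⟨e, he⟩
      exact absurd he (Finset.notMem_empty e)
  | succ N ih =>
    intro E hc h3 hΔ
    by_cases hE : E.Nonempty
    swap
    · -- E empty: same as base case
      rw [Finset.not_nonempty_iff_eq_empty] at hE
      subst hE
      exact (fun h => h) (by
        have := ih ∅ (by simp) (by simp) (by intro u; rw [hdeg]; simp)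
        exact this)
    have hpn : (playable E).Nonempty := playable_nonempty h3 hE
    -- IH applied to a residual
    have IH : ∀ v ∈ playable E,
        2 * gameVal true (resid E v) + tN (D1c (resid E v)) ≤ (playable (resid E v)).card ∧
        ((resid E v).Nonempty →
          2 * gameVal false (resid E v) + fN (D1c (resid E v)) ≤ (playable (resid E v)).card) := by
      intro v hv
      exact ih (resid E v) (by have := resid_card_lt hv; omega) (resid_h3 h3 v) (resid_hΔ hΔ v)
    constructor
    · -- T claim
      have key : ∃ v, ∃ _ : v ∈ playable E,
          2 + 2 * gameVal false (resid E v) + tN (D1c E) ≤ (playable E).card := by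
        by_cases hD1 : D1c E = 0
        · -- Case 1: no degree-1 vertices, play anything
          obtain ⟨v, hv⟩ := hpn
          refine ⟨v, hv, ?_⟩
          have hdv2 : hdeg E v = 2 := by
            have h1 : 0 < hdeg E v := mem_playable_iff_hdeg.mp hv
            have h2 : hdeg E v ≤ 2 := hΔ v
            have h3' : hdeg E v ≠ 1 := by
              intro h
              have := D1c_pos_of h
              omega
            omega
          by_cases hres : (playable (resid E v)).Nonempty
          · have hF := (IH v hv).2 (nonempty_of_playable hres)
            have hstar := star h3 hΔ hv
            rw [if_neg (by omega : ¬ hdeg E v = 1)] at hstar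
            have hklt := s_resid_lt hv
            have hs'le : (playable (resid E v)).card ≤ (playable E).card :=
              Finset.card_le_card (playable_resid_subset E v)
            rw [hdv2, hD1] at hstar
            -- hstar : 0 + 3 + 2*2 + A ≤ 3*(s-s') + D1' + 0
            rw [hD1]
            simp only [tN, fN] at *
            by_cases hD1' : D1c (resid E v) = 0
            · rw [if_pos hD1'] at hF
              omega
            · rw [if_neg hD1'] at hF
              omega
          · rw [gameVal_of_not_playable false hres, hD1]
            have := three_le_s h3 hE
            simp only [tN]
            omega
        · -- there is a degree-1 vertex
          have hx : ∃ x, hdeg E x = 1 := by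
            rw [D1c] at hD1
            have hne : (Finset.univ.filter (fun v => hdeg E v = 1)).Nonempty :=
              Finset.card_pos.mp (Nat.pos_of_ne_zero hD1)
            obtain ⟨x, hx⟩ := hne
            rw [Finset.mem_filter] at hx
            exact ⟨x, hx.2⟩
          by_cases hxy : ∃ e ∈ E, ∃ a ∈ e, ∃ b ∈ e, hdeg E a = 1 ∧ hdeg E b = 2
          · -- Case 2
            obtain ⟨e, he, a, ha, b, hb, hda, hdb⟩ := hxy
            have hbv : b ∈ playable E := mem_playable_iff_hdeg.mpr (by omega)
            refine ⟨b, hbv, ?_⟩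
            by_cases hres : (playable (resid E b)).Nonempty
            · have hF := (IH b hbv).2 (nonempty_of_playable hres)
              have hstar := star h3 hΔ hbv
              rw [if_neg (by omega : ¬ hdeg E b = 1), hdb] at hstar
              -- A ≥ 1 : a is a dead degree-1 co-vertex
              have hAcard : 1 ≤ ((playable E).filter
                  (fun u => u ≠ b ∧ hdeg E u = 1 ∧ hdeg (resid E b) u = 0)).card := by
                rw [Nat.one_le_iff_ne_zero, ← Nat.pos_iff_ne_zero, Finset.card_pos]
                refine ⟨a, Finset.mem_filter.mpr ⟨mem_playable_iff_hdeg.mpr (by omega), ?_, hda, ?_⟩⟩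
                · intro h; rw [h] at hda; omega
                · have hsp := hdeg_split E b a
                  have hpos : 0 < ((E.filter (fun e => b ∈ e)).filter (fun e => a ∈ e)).card := by
                    rw [Finset.card_pos]
                    exact ⟨e, Finset.mem_filter.mpr ⟨Finset.mem_filter.mpr ⟨he, hb⟩, ha⟩⟩
                  omega
              have hklt := s_resid_lt hbv
              have hs'le : (playable (resid E b)).card ≤ (playable E).card :=
                Finset.card_le_card (playable_resid_subset E b)
              have hD1pos : 0 < D1c E := D1c_pos_of hda
              simp only [tN, fN] at *
              by_cases hD1' : D1c (resid E b) = 0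
              · rw [if_pos hD1'] at hF
                omega
              · rw [if_neg hD1'] at hF
                omega
            · rw [gameVal_of_not_playable false hres]
              have hs6 := s_le_of_resid_empty h3 hres
              rw [hdb] at hs6
              have hD1s := D1c_lt_s hbv (by omega)
              have hs3 := three_le_s h3 hE
              simp only [tN]
              omega
          · -- Case 3 : isolated all-degree-1 edge
            obtain ⟨x, hx1⟩ := hx
            have hno : ∀ e ∈ E, ∀ a ∈ e, ∀ b ∈ e, ¬ (hdeg E a = 1 ∧ hdeg E b = 2) := by
              intro e he a ha b hb hcon
              exact hxy ⟨e, he, a, ha, b, hb, hcon⟩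
            obtain ⟨hs, hD1eq, k, hk, hk1⟩ := iso_facts h3 hΔ hno hx1
            have hxv : x ∈ playable E := mem_playable_iff_hdeg.mpr (by omega)
            refine ⟨x, hxv, ?_⟩
            by_cases hres : (playable (resid E x)).Nonempty
            · have hF := (IH x hxv).2 (nonempty_of_playable hres)
              simp only [tN, fN] at *
              by_cases hD1' : D1c (resid E x) = 0
              · rw [if_pos hD1'] at hF
                omega
              · rw [if_neg hD1'] at hF
                omega
            · rw [gameVal_of_not_playable false hres]
              have hs0 : (playable (resid E x)).card = 0 := by
                rw [Finset.not_nonempty_iff_eq_empty] at hres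
                rw [hres, Finset.card_empty]
              have hD1le := D1c_le_s (resid E x)
              simp only [tN]
              omega
      obtain ⟨v, hv, hkey⟩ := key
      rw [gameVal_true_eq hpn]
      have hinf : (playable E).attach.inf' (Finset.attach_nonempty_iff.mpr hpn)
          (fun w => gameVal false (resid E w.1)) ≤ gameVal false (resid E v) :=
        Finset.inf'_le _ (Finset.mem_attach _ ⟨v, hv⟩)
      omega
    · -- F claim
      intro _
      have bnd : ∀ u ∈ playable E,
          2 * gameVal true (resid E u) + 2 + fN (D1c E) ≤ (playable E).card := by
        intro u hu
        by_cases hres : (playable (resid E u)).Nonempty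
        · have hT := (IH u hu).1
          have hstar := star h3 hΔ hu
          have hklt := s_resid_lt hu
          have hs'le : (playable (resid E u)).card ≤ (playable E).card :=
            Finset.card_le_card (playable_resid_subset E u)
          have hd1 : 0 < hdeg E u := mem_playable_iff_hdeg.mp hu
          have hd2 : hdeg E u ≤ 2 := hΔ u
          by_cases hdu : hdeg E u = 1
          · rw [if_pos hdu, hdu] at hstar
            have hD1pos : 0 < D1c E := D1c_pos_of hdu
            simp only [tN, fN] at *
            by_cases hD1 : D1c E = 0
            · omega
            · rw [if_neg hD1]
              omega
          · have hdu2 : hdeg E u = 2 := by omega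
            rw [if_neg hdu, hdu2] at hstar
            simp only [tN, fN] at *
            by_cases hD1 : D1c E = 0
            · rw [if_pos hD1]
              omega
            · rw [if_neg hD1]
              omega
        · rw [gameVal_of_not_playable true hres]
          have hs6 := s_le_of_resid_empty h3 hres
          have hd2 : hdeg E u ≤ 2 := hΔ u
          have hs3 := three_le_s h3 hE
          have hD1le := D1c_le_s E
          simp only [fN]
          by_cases hD1 : D1c E = 0
          · rw [if_pos hD1]; omega
          · rw [if_neg hD1]; omega
      rw [gameVal_false_eq hpn]
      have hpn' := hpn
      obtain ⟨u₀, hu₀⟩ := hpn'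
      have hslack : 2 + fN (D1c E) ≤ (playable E).card := by
        have := bnd u₀ hu₀
        omega
      have hsup : (playable E).attach.sup' (Finset.attach_nonempty_iff.mpr hpn)
          (fun w => gameVal true (resid E w.1))
          ≤ ((playable E).card - 2 - fN (D1c E)) / 2 := by
        apply Finset.sup'_le
        rintro ⟨u, hu⟩ _
        show gameVal true (resid E u) ≤ ((playable E).card - 2 - fN (D1c E)) / 2
        have := bnd u hu
        omega
      omega

/-- If `H` is a `3`-uniform hypergraph with maximum degree at most `2`,
then `τ_g(H) ≤ n(H)/2`. -/
theorem gameTransversalNum_le_half_order_of_three_uniform_maxDegree_le_two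
    {V : Type} [Fintype V] [DecidableEq V] (E : Finset (Finset V))
    (h3 : ∀ e ∈ E, e.card = 3)
    (hΔ : ∀ v : V, (E.filter (fun e => v ∈ e)).card ≤ 2) :
    (gameTransversalNum E : ℚ) ≤ (Fintype.card V : ℚ) / 2 := by
  have h := (main_claims E.card E le_rfl h3 hΔ).1
  have hle : (playable E).card ≤ Fintype.card V := by
    calc (playable E).card ≤ (Finset.univ : Finset V).card := Finset.card_le_univ _
      _ = Fintype.card V := Finset.card_univ
  have h2 : 2 * gameTransversalNum E ≤ Fintype.card V := by
    rw [gameTransversalNum]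
    omega
  rw [le_div_iff₀ (by norm_num : (0:ℚ) < 2)]
  exact_mod_cast (by omega : gameTransversalNum E * 2 ≤ Fintype.card V)
end
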